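/- arXiv:1108.2542 — 2 statements merged into one kernel-verified Lean document; each statement's English description precedes it below -/
import Mathlib

section
/- Let G be a finite connected simple graph containing a cycle, T a spanning tree of G, G̃ the lift of G with respect to T, and F : V(G̃) → ℝ^{E(G)} the cut-indicator map. Then for all x, y ∈ V(G̃): ‖F(x) − F(y)‖₁ ≤ d_{G̃}(x,y) ≤ (1 + 6·diam(G)/girth(G))·‖F(x) − F(y)‖₁. -/
open SimpleGraph

noncomputable section
attribute [local instance] Classical.propDecidable

variable {V : Type*}

/-- The set `S` of edges of `G` not in the spanning tree `T`. -/
def nonTreeEdges (G T : SimpleGraph V) : Set (Sym2 V) := G.edgeSet \ T.edgeSet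

/-- The lift `G̃` of `G` with respect to the spanning tree `T`: its vertices are the pairs
`(u, f)` with `u ∈ V(G)` and `f : S → ZMod 2`; `(u,f)` is adjacent to `(v,g)` iff
`uv ∈ E(G)` and `g` agrees with `f` except that `g(uv) = f(uv) + 1` when `uv ∈ S`
(so `g = f` when `uv ∈ E(T)`). -/
def liftGraph (G T : SimpleGraph V) :
    SimpleGraph (V × (nonTreeEdges G T → ZMod 2)) where
  Adj p q := G.Adj p.1 q.1 ∧
    q.2 = fun e => p.2 e + (if (e : Sym2 V) = s(p.1, q.1) then 1 else 0)
  symm := by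
    refine ⟨?_⟩
    rintro p q ⟨hadj, hf⟩
    refine ⟨hadj.symm, ?_⟩
    have key : ∀ a c : ZMod 2, a + c + c = a := by decide
    funext e
    have hs : s(q.1, p.1) = s(p.1, q.1) := Sym2.eq_swap
    rw [hs, hf]
    exact (key _ _).symm
  loopless := ⟨fun p h => G.loopless.irrefl p.1 h.1⟩

/-- The projection `π : G̃ → G` on vertices, as a graph homomorphism. -/
def liftProj (G T : SimpleGraph V) : liftGraph G T →g G :=
  ⟨Prod.fst, fun h => And.left h⟩

lemma liftGraph_adj {G T : SimpleGraph V} {p q : V × (nonTreeEdges G T → ZMod 2)} :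
    (liftGraph G T).Adj p q ↔ G.Adj p.1 q.1 ∧
      q.2 = fun e => p.2 e + (if (e : Sym2 V) = s(p.1, q.1) then 1 else 0) := Iff.rfl

/-- The projection `π` on edges of the lift. -/
def edgeProj (G T : SimpleGraph V) :
    Sym2 (V × (nonTreeEdges G T → ZMod 2)) → Sym2 V :=
  Sym2.map Prod.fst

/-- Indicator (in `ZMod 2`) that an edge `s` joins the vertex set `B` to its complement:
it equals `1` iff exactly one endpoint of `s` lies in `B`. -/
def crossIndicator (B : Set V) : Sym2 V → ZMod 2 :=
  Sym2.lift ⟨fun p q => (if p ∈ B then 1 else 0) + (if q ∈ B then 1 else 0),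
    fun p q => add_comm _ _⟩

/-- For a tree edge `e`, the side `B` of `T - e`: the component of `T - e` containing the
second endpoint of `e`. -/
def treeSide (T : SimpleGraph V) (e : Sym2 V) : Set V :=
  {v | (T.deleteEdges {e}).Reachable (Quot.out e).2 v}

/-- The function `h_e` on the vertices of the lift: for `e ∈ S`, `h_e (v, f) = f e`;
for a tree edge `e`, `h_e (v, f)` is the indicator that `v` lies in the component `B`
of `T - e` plus the sum of the values `f s` over the edges `s ∈ S` joining the two
components of `T - e`. -/
def hcut (G T : SimpleGraph V) (e : Sym2 V) :
    V × (nonTreeEdges G T → ZMod 2) → ZMod 2 := fun p =>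
  if he : e ∈ nonTreeEdges G T then p.2 ⟨e, he⟩
  else (if p.1 ∈ treeSide T e then 1 else 0) +
    ∑ᶠ s : nonTreeEdges G T, crossIndicator (treeSide T e) s * p.2 s

/-- The cut-indicator map `F : V(G̃) → ℝ^{E(G)}`, `F(x)(e) = h_e(x) ∈ {0,1}`, with
`ℝ^{E(G)}` carrying the `ℓ₁`-norm. -/
def cutMap (G T : SimpleGraph V) :
    (V × (nonTreeEdges G T → ZMod 2)) → PiLp 1 (fun _ : G.edgeSet => ℝ) :=
  fun p => WithLp.toLp 1 (fun e => ((hcut G T e p).val : ℝ))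

-- ### Part 1 : treeSide lemmas

lemma treeSide_adj_iff {T : SimpleGraph V} {e : Sym2 V} {a b : V}
    (hab : T.Adj a b) (hne : s(a, b) ≠ e) :
    a ∈ treeSide T e ↔ b ∈ treeSide T e := by
  have hadj : (T.deleteEdges {e}).Adj a b := by
    rw [SimpleGraph.deleteEdges_adj]
    exact ⟨hab, by simpa using hne⟩
  constructor
  · intro h; exact h.trans hadj.reachable
  · intro h; exact h.trans hadj.symm.reachable

lemma treeSide_edge {T : SimpleGraph V} (hT : T.IsTree) {a b : V} (hab : T.Adj a b) :
    (a ∈ treeSide T s(a, b)) ↔ ¬ (b ∈ treeSide T s(a, b)) := by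
  set e : Sym2 V := s(a, b) with he
  have hbridge : T.IsBridge e := by
    have := SimpleGraph.isAcyclic_iff_forall_edge_isBridge.mp hT.IsAcyclic
    exact this (T.mem_edgeSet.mpr hab)
  have hout : s((Quot.out e).1, (Quot.out e).2) = e := by
    show Quot.mk _ _ = e
    rw [Prod.mk.eta]
    exact Quot.out_eq e
  have hnr : ¬ (T.deleteEdges {e}).Reachable (Quot.out e).1 (Quot.out e).2 := by
    have hb2 : T.IsBridge s((Quot.out e).1, (Quot.out e).2) := by rw [hout]; exact hbridge
    rw [SimpleGraph.isBridge_iff] at hb2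
    have h2 := hb2
    rw [hout] at h2
    exact h2
  have h2mem : (Quot.out e).2 ∈ treeSide T e := SimpleGraph.Reachable.refl _
  have h1mem : (Quot.out e).1 ∉ treeSide T e := fun h => hnr h.symm
  have hcases : (a = (Quot.out e).1 ∧ b = (Quot.out e).2) ∨
      (a = (Quot.out e).2 ∧ b = (Quot.out e).1) := by
    have : s(a, b) = s((Quot.out e).1, (Quot.out e).2) := by rw [hout]
    exact Sym2.eq_iff.mp this
  rcases hcases with ⟨ha, hb⟩ | ⟨ha, hb⟩
  · rw [ha, hb]; simp [h2mem, h1mem]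
  · rw [ha, hb]; simp [h2mem, h1mem]

-- ### Part 2 : the step lemma

lemma hcut_step [Fintype V] (G T : SimpleGraph V) (hT : T.IsTree) (hTG : T ≤ G)
    {p q : V × (nonTreeEdges G T → ZMod 2)} (hpq : (liftGraph G T).Adj p q)
    {e : Sym2 V} (he : e ∈ G.edgeSet) :
    hcut G T e q = hcut G T e p + (if e = s(p.1, q.1) then 1 else 0) := by
  obtain ⟨hadj, hq2⟩ := liftGraph_adj.mp hpq
  set e₀ : Sym2 V := s(p.1, q.1) with he₀
  by_cases heS : e ∈ nonTreeEdges G T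
  · rw [hcut, hcut, dif_pos heS, dif_pos heS, hq2]
  · have heT : e ∈ T.edgeSet := by
      by_contra h
      exact heS ⟨he, h⟩
    rw [hcut, hcut, dif_neg heS, dif_neg heS]
    rw [finsum_eq_sum_of_fintype, finsum_eq_sum_of_fintype]
    by_cases h0S : e₀ ∈ nonTreeEdges G T
    · -- the traversed edge is a non-tree edge; e is a tree edge so e ≠ e₀
      have hee₀ : e ≠ e₀ := fun h => h0S.2 (h ▸ heT)
      rw [if_neg hee₀]
      have hsum : ∑ s : nonTreeEdges G T, crossIndicator (treeSide T e) ↑s * q.2 s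
          = (∑ s : nonTreeEdges G T, crossIndicator (treeSide T e) ↑s * p.2 s)
            + crossIndicator (treeSide T e) e₀ := by
        rw [hq2]
        have : ∀ s : nonTreeEdges G T,
            crossIndicator (treeSide T e) ↑s * (p.2 s + if (s : Sym2 V) = e₀ then 1 else 0)
            = crossIndicator (treeSide T e) ↑s * p.2 s
              + (if s = (⟨e₀, h0S⟩ : nonTreeEdges G T) then crossIndicator (treeSide T e) e₀ else 0) := by
          intro s
          by_cases hs : (s : Sym2 V) = e₀
          · have hs' : s = (⟨e₀, h0S⟩ : nonTreeEdges G T) := Subtype.ext hs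
            rw [if_pos hs, if_pos hs', mul_add, mul_one, hs]
          · have hs' : s ≠ (⟨e₀, h0S⟩ : nonTreeEdges G T) := fun h => hs (by rw [h])
            rw [if_neg hs, if_neg hs']; ring
        rw [Finset.sum_congr rfl (fun s _ => this s), Finset.sum_add_distrib,
          Finset.sum_ite_eq' Finset.univ _ (fun _ => crossIndicator (treeSide T e) e₀)]
        simp
      rw [hsum]
      -- now the indicator identity
      have hcross : crossIndicator (treeSide T e) e₀
          = (if p.1 ∈ treeSide T e then 1 else 0) + (if q.1 ∈ treeSide T e then 1 else 0) := by
        rw [he₀]; rfl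
      rw [hcross]
      have key : ∀ a b s : ZMod 2, b + (s + (a + b)) = a + s + 0 := by decide
      exact key _ _ _
    · -- the traversed edge is a tree edge
      have h0T : e₀ ∈ T.edgeSet := by
        by_contra h
        exact h0S ⟨G.mem_edgeSet.mpr hadj, h⟩
      have hq2' : q.2 = p.2 := by
        rw [hq2]; funext s
        have : (s : Sym2 V) ≠ e₀ := fun h => s.2.2 (h ▸ h0T)
        rw [if_neg this, add_zero]
      rw [hq2']
      by_cases hee₀ : e = e₀
      · rw [if_pos hee₀]
        have hTadj : T.Adj p.1 q.1 := T.mem_edgeSet.mp h0T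
        have hside := treeSide_edge hT hTadj
        rw [← he₀, ← hee₀] at hside
        have key1 : ∀ s : ZMod 2, 0 + s = 1 + s + 1 := by decide
        have key2 : ∀ s : ZMod 2, 1 + s = 0 + s + 1 := by decide
        by_cases h1 : p.1 ∈ treeSide T e
        · have h2 : q.1 ∉ treeSide T e := hside.mp h1
          rw [if_pos h1, if_neg h2]
          exact key1 _
        · have h2 : q.1 ∈ treeSide T e := by
            by_contra h2
            exact h1 (hside.mpr h2)
          rw [if_neg h1, if_pos h2]
          exact key2 _
      · rw [if_neg hee₀, add_zero]
        have hTadj : T.Adj p.1 q.1 := T.mem_edgeSet.mp h0T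
        have : p.1 ∈ treeSide T e ↔ q.1 ∈ treeSide T e :=
          treeSide_adj_iff hTadj (by rw [← he₀]; exact Ne.symm hee₀)
        by_cases h1 : p.1 ∈ treeSide T e
        · rw [if_pos h1, if_pos (this.mp h1)]
        · rw [if_neg h1, if_neg (fun h => h1 (this.mpr h))]


-- ### Part 3 : lifting walks

def toggleF (G T : SimpleGraph V) (f : nonTreeEdges G T → ZMod 2) (e₀ : Sym2 V) :
    nonTreeEdges G T → ZMod 2 :=
  fun e => f e + (if (e : Sym2 V) = e₀ then 1 else 0)

def pushf (G T : SimpleGraph V) : ∀ {a b : V}, G.Walk a b →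
    (nonTreeEdges G T → ZMod 2) → (nonTreeEdges G T → ZMod 2)
  | _, _, SimpleGraph.Walk.nil, f => f
  | _, _, @SimpleGraph.Walk.cons _ _ a c _ h W, f => pushf G T W (toggleF G T f s(a, c))

def liftWalk (G T : SimpleGraph V) : ∀ {a b : V} (W : G.Walk a b)
    (f : nonTreeEdges G T → ZMod 2), (liftGraph G T).Walk (a, f) (b, pushf G T W f)
  | _, _, SimpleGraph.Walk.nil, f => SimpleGraph.Walk.nil
  | _, _, @SimpleGraph.Walk.cons _ _ a c _ h W, f =>
      SimpleGraph.Walk.cons (liftGraph_adj.mpr ⟨h, rfl⟩ : (liftGraph G T).Adj (a, f) (c, toggleF G T f s(a, c)))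
        (liftWalk G T W (toggleF G T f s(a, c)))

lemma liftWalk_length (G T : SimpleGraph V) {a b : V} (W : G.Walk a b)
    (f : nonTreeEdges G T → ZMod 2) : (liftWalk G T W f).length = W.length := by
  induction W generalizing f with
  | nil => rfl
  | cons h W ih => exact congrArg (· + 1) (ih _)

def edgeParity (e : Sym2 V) : List (Sym2 V) → ZMod 2
  | [] => 0
  | x :: l => (if e = x then 1 else 0) + edgeParity e l

lemma edgeParity_append (e : Sym2 V) (l₁ l₂ : List (Sym2 V)) :
    edgeParity e (l₁ ++ l₂) = edgeParity e l₁ + edgeParity e l₂ := by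
  induction l₁ with
  | nil => simp [edgeParity]
  | cons x l ih => simp [edgeParity, ih]; ring

lemma edgeParity_reverse (e : Sym2 V) (l : List (Sym2 V)) :
    edgeParity e l.reverse = edgeParity e l := by
  induction l with
  | nil => rfl
  | cons x l ih =>
    rw [List.reverse_cons, edgeParity_append, ih, edgeParity]
    simp [edgeParity]
    ring

lemma edgeParity_nodup (e : Sym2 V) (l : List (Sym2 V)) (hl : l.Nodup) :
    edgeParity e l = if e ∈ l then 1 else 0 := by
  induction l with
  | nil => simp [edgeParity]
  | cons x l ih =>
    rw [edgeParity, ih (List.Nodup.of_cons hl)]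
    by_cases hex : e = x
    · have hnotin : e ∉ l := by
        rw [hex]
        exact (List.nodup_cons.mp hl).1
      simp [hex, hnotin, hex ▸ hnotin]
    · by_cases hel : e ∈ l <;> simp [hex, hel]

lemma hcut_liftWalk [Fintype V] (G T : SimpleGraph V) (hT : T.IsTree) (hTG : T ≤ G)
    {a b : V} (W : G.Walk a b) (f : nonTreeEdges G T → ZMod 2)
    {e : Sym2 V} (he : e ∈ G.edgeSet) :
    hcut G T e (b, pushf G T W f) = hcut G T e (a, f) + edgeParity e W.edges := by
  induction W generalizing f with
  | nil => simp [pushf, edgeParity, SimpleGraph.Walk.edges_nil]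
  | @cons a c b h W ih =>
    have hstep : hcut G T e (c, toggleF G T f s(a, c)) = hcut G T e (a, f)
        + (if e = s(a, c) then 1 else 0) :=
      hcut_step G T hT hTG (liftGraph_adj.mpr ⟨h, rfl⟩ :
        (liftGraph G T).Adj (a, f) (c, toggleF G T f s(a, c))) he
    rw [SimpleGraph.Walk.edges_cons, edgeParity]
    show hcut G T e (b, pushf G T W (toggleF G T f s(a, c))) = _
    rw [ih (toggleF G T f s(a, c)), hstep]
    ring

lemma pushf_tree (G T : SimpleGraph V) {a b : V} (W : G.Walk a b)
    (hW : ∀ e ∈ W.edges, e ∈ T.edgeSet) (f : nonTreeEdges G T → ZMod 2) :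
    pushf G T W f = f := by
  induction W generalizing f with
  | nil => rfl
  | @cons a c b h W ih =>
    show pushf G T W (toggleF G T f s(a, c)) = f
    have h1 : toggleF G T f s(a, c) = f := by
      funext s
      have hs : (s : Sym2 V) ≠ s(a, c) := by
        intro hh
        exact s.2.2 (hh ▸ hW s(a, c) (by simp [SimpleGraph.Walk.edges_cons]))
      simp [toggleF, hs]
    rw [h1]
    exact ih (fun e hh => hW e (by simp [SimpleGraph.Walk.edges_cons, hh])) f

lemma edgeParity_tree_walk (G T : SimpleGraph V) {a b : V} (W : G.Walk a b)
    (hW : ∀ e' ∈ W.edges, e' ∈ T.edgeSet) {e : Sym2 V} (he : e ∉ T.edgeSet) :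
    edgeParity e W.edges = 0 := by
  induction W with
  | nil => rfl
  | @cons a c b h W ih =>
    rw [SimpleGraph.Walk.edges_cons, edgeParity]
    have h1 : e ≠ s(a, c) := by
      intro hh
      exact he (hh ▸ hW s(a, c) (by simp [SimpleGraph.Walk.edges_cons]))
    rw [if_neg h1, ih (fun e' hh => hW e' (by simp [SimpleGraph.Walk.edges_cons, hh]))]
    ring

-- ### Part 4 : connectivity of the lift

lemma lift_reachable_fixed_vertex [Fintype V] (G T : SimpleGraph V) (hT : T.IsTree) (hTG : T ≤ G)
    (v : V) (f g : nonTreeEdges G T → ZMod 2) :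
    (liftGraph G T).Reachable (v, f) (v, g) := by
  classical
  generalize hk : (Finset.univ.filter
      (fun s : nonTreeEdges G T => f s ≠ g s)).card = k
  induction k generalizing f with
  | zero =>
    have : f = g := by
      funext s
      by_contra hs
      have : s ∈ Finset.univ.filter (fun s : nonTreeEdges G T => f s ≠ g s) := by
        simp [hs]
      rw [Finset.card_eq_zero] at hk
      simp [hk] at this
    rw [this]
  | succ n ih =>
    have hne : (Finset.univ.filter (fun s : nonTreeEdges G T => f s ≠ g s)).Nonempty := by
      rw [← Finset.card_pos, hk]; omega
    obtain ⟨s₀, hs₀⟩ := hne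
    have hs₀ne : f s₀ ≠ g s₀ := by simpa using hs₀
    -- endpoints of s₀
    obtain ⟨x, y, hxy⟩ : ∃ x y : V, (s₀ : Sym2 V) = s(x, y) := by
      refine ⟨(Quot.out (s₀ : Sym2 V)).1, (Quot.out (s₀ : Sym2 V)).2, ?_⟩
      rw [← Prod.mk.eta (p := Quot.out (s₀ : Sym2 V))]
      exact (Quot.out_eq _).symm
    have hadj : G.Adj x y := G.mem_edgeSet.mp (hxy ▸ s₀.2.1)
    -- tree walks v → x and y → v, transferred to G
    obtain ⟨W₁⟩ := hT.isConnected v x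
    obtain ⟨W₂⟩ := hT.isConnected y v
    have hsub : ∀ {c d : V} (W : T.Walk c d), ∀ e ∈ W.edges, e ∈ G.edgeSet := by
      intro c d W e heW
      exact SimpleGraph.edgeSet_mono hTG (W.edges_subset_edgeSet heW)
    let W : G.Walk v v :=
      ((W₁.transfer G (hsub W₁)).append (SimpleGraph.Walk.cons hadj SimpleGraph.Walk.nil)).append
        (W₂.transfer G (hsub W₂))
    -- the lift of W ends at (v, f') where f' = toggle of f at s₀
    have hreach1 : (liftGraph G T).Reachable (v, f) (v, pushf G T W f) :=
      ⟨liftWalk G T W f⟩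
    have hf' : pushf G T W f = fun s => f s + (if s = s₀ then 1 else 0) := by
      funext s
      have hparity : hcut G T (s : Sym2 V) (v, pushf G T W f)
          = hcut G T (s : Sym2 V) (v, f) + edgeParity (s : Sym2 V) W.edges :=
        hcut_liftWalk G T hT hTG W f s.2.1
      have hh1 : hcut G T (s : Sym2 V) (v, pushf G T W f) = pushf G T W f s := by
        rw [hcut, dif_pos s.2]
      have hh2 : hcut G T (s : Sym2 V) (v, f) = f s := by
        rw [hcut, dif_pos s.2]
      have hpar : edgeParity (s : Sym2 V) W.edges = (if s = s₀ then 1 else 0) := by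
        show edgeParity (s : Sym2 V) (SimpleGraph.Walk.edges _) = _
        rw [SimpleGraph.Walk.edges_append, SimpleGraph.Walk.edges_append,
          edgeParity_append, edgeParity_append]
        have ht1 : edgeParity (s : Sym2 V) (W₁.transfer G (hsub W₁)).edges = 0 := by
          apply edgeParity_tree_walk G T
          · intro e' he'
            rw [SimpleGraph.Walk.edges_transfer] at he'
            exact W₁.edges_subset_edgeSet he'
          · exact s.2.2
        have ht2 : edgeParity (s : Sym2 V) (W₂.transfer G (hsub W₂)).edges = 0 := by
          apply edgeParity_tree_walk G T
          · intro e' he'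
            rw [SimpleGraph.Walk.edges_transfer] at he'
            exact W₂.edges_subset_edgeSet he'
          · exact s.2.2
        rw [ht1, ht2]
        have : edgeParity (s : Sym2 V) (SimpleGraph.Walk.cons hadj SimpleGraph.Walk.nil).edges
            = (if s = s₀ then 1 else 0) := by
          rw [SimpleGraph.Walk.edges_cons, SimpleGraph.Walk.edges_nil, edgeParity, edgeParity]
          have : ((s : Sym2 V) = s(x, y)) ↔ (s = s₀) := by
            rw [← hxy]
            exact ⟨fun h => Subtype.ext h, fun h => by rw [h]⟩
          rw [add_zero]
          by_cases hh : s = s₀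
          · rw [if_pos (this.mpr hh), if_pos hh]
          · rw [if_neg (fun hc => hh (this.mp hc)), if_neg hh]
        rw [this]
        ring
      have := hh1 ▸ hh2 ▸ hpar ▸ hparity
      rw [this]
    -- new difference set is smaller
    have hcard : (Finset.univ.filter
        (fun s : nonTreeEdges G T => pushf G T W f s ≠ g s)).card = n := by
      have hset : Finset.univ.filter (fun s : nonTreeEdges G T => pushf G T W f s ≠ g s)
          = (Finset.univ.filter (fun s : nonTreeEdges G T => f s ≠ g s)).erase s₀ := by
        ext s
        simp only [Finset.mem_filter, Finset.mem_univ, true_and, Finset.mem_erase, hf']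
        by_cases hh : s = s₀
        · subst hh
          have h1 : f s + 1 = g s := by
            have : ∀ a b : ZMod 2, a ≠ b → a + 1 = b := by decide
            exact this _ _ hs₀ne
          simp [h1]
        · simp [hh]
      rw [hset, Finset.card_erase_of_mem hs₀, hk]
      omega
    exact hreach1.trans (ih _ hcard)

lemma lift_connected [Fintype V] (G T : SimpleGraph V) (hG : G.Connected)
    (hT : T.IsTree) (hTG : T ≤ G) : (liftGraph G T).Connected := by
  have hne : Nonempty V := hG.nonempty
  constructor
  · rintro ⟨u, f⟩ ⟨v, g⟩
    obtain ⟨W⟩ := hG u v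
    have h1 : (liftGraph G T).Reachable (u, f) (v, pushf G T W f) := ⟨liftWalk G T W f⟩
    exact h1.trans (lift_reachable_fixed_vertex G T hT hTG v _ g)


-- ### Part 5 : the mismatch set

variable [Fintype V]

def mismatch (G T : SimpleGraph V) (x y : V × (nonTreeEdges G T → ZMod 2)) :
    Finset (Sym2 V) :=
  G.edgeFinset.filter (fun e => hcut G T e x ≠ hcut G T e y)

lemma zmod2_abs_sub (a b : ZMod 2) :
    |((a.val : ℝ)) - ((b.val : ℝ))| = if a = b then 0 else 1 := by
  have h2 : ∀ c : ZMod 2, c = 0 ∨ c = 1 := by decide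
  rcases h2 a with ha | ha <;> rcases h2 b with hb | hb <;>
    subst ha <;> subst hb <;> norm_num [ZMod.val_zero, ZMod.val_one]

lemma norm_cutMap_sub (G T : SimpleGraph V) (x y : V × (nonTreeEdges G T → ZMod 2)) :
    ‖cutMap G T x - cutMap G T y‖ = ((mismatch G T x y).card : ℝ) := by
  have h1 : ‖cutMap G T x - cutMap G T y‖
      = ∑ e : G.edgeSet, ‖(cutMap G T x - cutMap G T y) e‖ := by
    rw [PiLp.norm_eq_sum (by norm_num : 0 < (1 : ENNReal).toReal)]
    simp [Real.rpow_one]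
  rw [h1]
  have h2 : ∀ e : G.edgeSet, ‖(cutMap G T x - cutMap G T y) e‖
      = if hcut G T (e : Sym2 V) x = hcut G T (e : Sym2 V) y then (0:ℝ) else 1 := by
    intro e
    have : (cutMap G T x - cutMap G T y) e = cutMap G T x e - cutMap G T y e := rfl
    rw [this, Real.norm_eq_abs]
    exact zmod2_abs_sub _ _
  rw [Finset.sum_congr rfl (fun e _ => h2 e)]
  rw [Finset.sum_set_coe (s := G.edgeSet)
    (f := fun e => if hcut G T e x = hcut G T e y then (0:ℝ) else 1)]
  have h3 : ∀ e, (if hcut G T e x = hcut G T e y then (0:ℝ) else 1)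
      = (if hcut G T e x ≠ hcut G T e y then (1:ℝ) else 0) := by
    intro e
    by_cases hh : hcut G T e x = hcut G T e y <;> simp [hh]
  rw [Finset.sum_congr rfl (fun e _ => h3 e), Finset.sum_boole]
  rfl

lemma mismatch_self (G T : SimpleGraph V) (z : V × (nonTreeEdges G T → ZMod 2)) :
    mismatch G T z z = ∅ := by
  rw [mismatch, Finset.filter_eq_empty_iff]
  intro e _
  simp

lemma mismatch_card_le_walk_length (G T : SimpleGraph V) (hT : T.IsTree) (hTG : T ≤ G)
    {x y : V × (nonTreeEdges G T → ZMod 2)} (W : (liftGraph G T).Walk x y) :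
    (mismatch G T x y).card ≤ W.length := by
  induction W with
  | nil => simp [mismatch_self]
  | @cons p q y hpq W ih =>
    have hsub : mismatch G T p y ⊆ insert s(p.1, q.1) (mismatch G T q y) := by
      intro e he
      rw [mismatch, Finset.mem_filter] at he
      by_cases hee : e = s(p.1, q.1)
      · rw [hee]; exact Finset.mem_insert_self _ _
      · apply Finset.mem_insert_of_mem
        rw [mismatch, Finset.mem_filter]
        refine ⟨he.1, ?_⟩
        have hstep := hcut_step G T hT hTG hpq (SimpleGraph.mem_edgeFinset.mp he.1)
        rw [if_neg hee, add_zero] at hstep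
        rw [hstep]
        exact he.2
    calc (mismatch G T p y).card ≤ (insert s(p.1, q.1) (mismatch G T q y)).card :=
          Finset.card_le_card hsub
      _ ≤ (mismatch G T q y).card + 1 := Finset.card_insert_le _ _
      _ ≤ W.length + 1 := by omega
      _ = (SimpleGraph.Walk.cons hpq W).length := (SimpleGraph.Walk.length_cons _ _).symm

-- ### Part 6 : degree parity of the mismatch set

def eind (w : V) (e : Sym2 V) : ZMod 2 := if w ∈ e then 1 else 0

lemma eind_edge {w a b : V} (hab : a ≠ b) :
    eind w s(a, b) = (if w = a then 1 else 0) + (if w = b then 1 else 0) := by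
  rw [eind]
  by_cases h1 : w = a
  · subst h1
    simp [Sym2.mem_iff, hab]
  · by_cases h2 : w = b
    · subst h2
      simp [Sym2.mem_iff, h1]
    · have : w ∉ s(a, b) := by
        rw [Sym2.mem_iff]
        push_neg
        exact ⟨h1, h2⟩
      simp [this, h1, h2]

lemma phi_adj (G T : SimpleGraph V) (hT : T.IsTree) (hTG : T ≤ G) (w : V)
    {p q : V × (nonTreeEdges G T → ZMod 2)} (hpq : (liftGraph G T).Adj p q) :
    (∑ e ∈ G.edgeFinset, eind w e * hcut G T e q) + (if w = q.1 then 1 else 0)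
    = (∑ e ∈ G.edgeFinset, eind w e * hcut G T e p) + (if w = p.1 then 1 else 0) := by
  have hadj : G.Adj p.1 q.1 := (liftGraph_adj.mp hpq).1
  have hsum : ∑ e ∈ G.edgeFinset, eind w e * hcut G T e q
      = (∑ e ∈ G.edgeFinset, eind w e * hcut G T e p) + eind w s(p.1, q.1) := by
    have hterm : ∀ e ∈ G.edgeFinset, eind w e * hcut G T e q
        = eind w e * hcut G T e p + (if e = s(p.1, q.1) then eind w e else 0) := by
      intro e he
      rw [hcut_step G T hT hTG hpq (SimpleGraph.mem_edgeFinset.mp he)]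
      by_cases hh : e = s(p.1, q.1)
      · rw [if_pos hh, if_pos hh, mul_add, mul_one]
      · rw [if_neg hh, if_neg hh, add_zero, add_zero]
    rw [Finset.sum_congr rfl hterm, Finset.sum_add_distrib,
      Finset.sum_ite_eq' G.edgeFinset s(p.1, q.1) (eind w),
      if_pos (SimpleGraph.mem_edgeFinset.mpr (G.mem_edgeSet.mpr hadj))]
  rw [hsum, eind_edge hadj.ne]
  have key : ∀ S a b : ZMod 2, S + (a + b) + b = S + a := by decide
  exact key _ _ _

lemma phi_walk (G T : SimpleGraph V) (hT : T.IsTree) (hTG : T ≤ G) (w : V)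
    {x y : V × (nonTreeEdges G T → ZMod 2)} (W : (liftGraph G T).Walk x y) :
    (∑ e ∈ G.edgeFinset, eind w e * hcut G T e x) + (if w = x.1 then 1 else 0)
    = (∑ e ∈ G.edgeFinset, eind w e * hcut G T e y) + (if w = y.1 then 1 else 0) := by
  induction W with
  | nil => rfl
  | @cons p q y hpq W ih => rw [← ih, phi_adj G T hT hTG w hpq]

lemma mismatch_parity (G T : SimpleGraph V) (hG : G.Connected) (hT : T.IsTree) (hTG : T ≤ G)
    (x y : V × (nonTreeEdges G T → ZMod 2)) (w : V) :
    ∑ e ∈ G.edgeFinset, eind w e * (hcut G T e x + hcut G T e y)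
    = (if w = x.1 then 1 else 0) + (if w = y.1 then 1 else 0) := by
  obtain ⟨W⟩ := (lift_connected G T hG hT hTG) x y
  have hphi := phi_walk G T hT hTG w W
  have hsplit : ∑ e ∈ G.edgeFinset, eind w e * (hcut G T e x + hcut G T e y)
      = (∑ e ∈ G.edgeFinset, eind w e * hcut G T e x)
        + ∑ e ∈ G.edgeFinset, eind w e * hcut G T e y := by
    rw [← Finset.sum_add_distrib]
    exact Finset.sum_congr rfl (fun e _ => by rw [mul_add])
  rw [hsplit]
  have key : ∀ A B a b : ZMod 2, A + a = B + b → A + B = a + b := by decide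
  exact key _ _ _ _ hphi


-- ### Part 7 : handshake within a component

lemma zmod2_odd_iff (n : ℕ) : (n : ZMod 2) = 1 ↔ Odd n := by
  rw [Nat.odd_iff, ← ZMod.natCast_mod n 2]
  rcases Nat.mod_two_eq_zero_or_one n with h | h <;> rw [h] <;> push_cast <;> simp

lemma zmod2_even_iff (n : ℕ) : (n : ZMod 2) = 0 ↔ Even n := by
  rw [Nat.even_iff, ← ZMod.natCast_mod n 2]
  rcases Nat.mod_two_eq_zero_or_one n with h | h <;> rw [h] <;> push_cast <;> simp

lemma exists_odd_degree_reachable (H : SimpleGraph V) {a : V} (ha : Odd (H.degree a)) :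
    ∃ b, b ≠ a ∧ H.Reachable a b ∧ Odd (H.degree b) := by
  classical
  let H' : SimpleGraph V :=
    { Adj := fun x z => H.Adj x z ∧ H.Reachable a x ∧ H.Reachable a z
      symm := ⟨by rintro x z ⟨h1, h2, h3⟩; exact ⟨h1.symm, h3, h2⟩⟩
      loopless := ⟨fun x h => H.loopless.irrefl x h.1⟩ }
  have hnbr : ∀ x, H.Reachable a x → H'.neighborFinset x = H.neighborFinset x := by
    intro x hx
    ext z
    simp only [SimpleGraph.mem_neighborFinset]
    constructor
    · exact fun h => h.1
    · intro hz
      exact ⟨hz, hx, hx.trans hz.reachable⟩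
  have hdeg : ∀ x, H.Reachable a x → H'.degree x = H.degree x := by
    intro x hx
    rw [SimpleGraph.degree, SimpleGraph.degree, hnbr x hx]
  have hdeg0 : ∀ x, ¬ H.Reachable a x → H'.degree x = 0 := by
    intro x hx
    rw [SimpleGraph.degree, Finset.card_eq_zero]
    ext z
    simp only [SimpleGraph.mem_neighborFinset, Finset.notMem_empty, iff_false]
    rintro ⟨_, h2, _⟩
    exact hx h2
  have heven := H'.even_card_odd_degree_vertices
  have hamem : a ∈ Finset.univ.filter (fun v => Odd (H'.degree v)) := by
    simp only [Finset.mem_filter, Finset.mem_univ, true_and]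
    rw [hdeg a (SimpleGraph.Reachable.refl a)]
    exact ha
  have hcard : 1 < (Finset.univ.filter (fun v => Odd (H'.degree v))).card := by
    rcases heven with ⟨k, hk⟩
    have hpos : 0 < (Finset.univ.filter (fun v => Odd (H'.degree v))).card :=
      Finset.card_pos.mpr ⟨a, hamem⟩
    omega
  obtain ⟨b, hbmem, hbne⟩ := Finset.exists_mem_ne hcard a
  have hbodd : Odd (H'.degree b) := by
    simpa using (Finset.mem_filter.mp hbmem).2
  have hbreach : H.Reachable a b := by
    by_contra hr
    rw [hdeg0 b hr] at hbodd
    simp at hbodd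
  refine ⟨b, hbne, hbreach, ?_⟩
  rwa [hdeg b hbreach] at hbodd

-- ### Part 8 : degree counting for fromEdgeSet

lemma degree_fromEdgeSet_card (G : SimpleGraph V) (Q : Finset (Sym2 V))
    (hQ : (Q : Set (Sym2 V)) ⊆ G.edgeSet) (w : V) :
    (SimpleGraph.fromEdgeSet (Q : Set (Sym2 V))).degree w
      = (Q.filter (fun e => w ∈ e)).card := by
  classical
  rw [SimpleGraph.degree]
  apply Finset.card_bij (fun z _ => s(w, z))
  · intro z hz
    rw [SimpleGraph.mem_neighborFinset, SimpleGraph.fromEdgeSet_adj] at hz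
    rw [Finset.mem_filter]
    exact ⟨hz.1, Sym2.mem_mk_left w z⟩
  · intro z1 h1 z2 h2 heq
    rw [SimpleGraph.mem_neighborFinset, SimpleGraph.fromEdgeSet_adj] at h1 h2
    rcases Sym2.eq_iff.mp heq with ⟨-, h⟩ | ⟨hw, hz⟩
    · exact h
    · rw [← hw, ← hz]
  · intro e he
    rw [Finset.mem_filter] at he
    obtain ⟨z, hz⟩ := Sym2.mem_iff_exists.mp he.2
    have hzw : w ≠ z := by
      intro hh
      have : e.IsDiag := by
        rw [hz, hh]
        exact Sym2.mk_isDiag_iff.mpr rfl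
      exact (SimpleGraph.not_isDiag_of_mem_edgeSet G (hQ he.1)) this
    refine ⟨z, ?_, hz.symm⟩
    rw [SimpleGraph.mem_neighborFinset, SimpleGraph.fromEdgeSet_adj]
    exact ⟨by rw [← hz]; exact he.1, hzw⟩

lemma degree_fromEdgeSet_parity (G : SimpleGraph V) (Q : Finset (Sym2 V))
    (hQ : (Q : Set (Sym2 V)) ⊆ G.edgeSet) (w : V) :
    ((SimpleGraph.fromEdgeSet (Q : Set (Sym2 V))).degree w : ZMod 2)
      = ∑ e ∈ Q, eind w e := by
  rw [degree_fromEdgeSet_card G Q hQ w]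
  rw [← Finset.sum_boole]
  rfl

-- ### Part 9 : extracting a cycle from an even edge set

lemma exists_cycle_in_even_finset (G : SimpleGraph V) {Q : Finset (Sym2 V)}
    (hQ : (Q : Set (Sym2 V)) ⊆ G.edgeSet) (hne : Q.Nonempty)
    (heven : ∀ w, (∑ e ∈ Q, eind w e) = 0) :
    ∃ (a : V) (C : G.Walk a a), C.IsCycle ∧ ∀ e ∈ C.edges, e ∈ Q := by
  classical
  obtain ⟨ebar, hebar⟩ := hne
  have hebarG : ebar ∈ G.edgeSet := hQ hebar
  obtain ⟨a, b, hab⟩ : ∃ a b, ebar = s(a, b) :=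
    ⟨(Quot.out ebar).1, (Quot.out ebar).2, by
      rw [← Prod.mk.eta (p := Quot.out ebar)]
      exact (Quot.out_eq _).symm⟩
  have hGadj : G.Adj a b := G.mem_edgeSet.mp (hab ▸ hebarG)
  have hne' : a ≠ b := hGadj.ne
  set Q' : Finset (Sym2 V) := Q.erase ebar with hQ'def
  have hQ'sub : (Q' : Set (Sym2 V)) ⊆ G.edgeSet := by
    intro e he
    have : e ∈ Q := Finset.mem_of_mem_erase (by exact_mod_cast he)
    exact hQ this
  have hdeg' : ∀ w, ((SimpleGraph.fromEdgeSet (Q' : Set (Sym2 V))).degree w : ZMod 2)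
      = eind w ebar := by
    intro w
    rw [degree_fromEdgeSet_parity G Q' hQ'sub w]
    have hsum : (∑ e ∈ Q', eind w e) + eind w ebar = ∑ e ∈ Q, eind w e :=
      Finset.sum_erase_add Q _ hebar
    have key : ∀ x c : ZMod 2, x + c = 0 → x = c := by decide
    exact key _ _ (by rw [hsum]; exact heven w)
  have hodda : Odd ((SimpleGraph.fromEdgeSet (Q' : Set (Sym2 V))).degree a) := by
    rw [← zmod2_odd_iff, hdeg' a]
    rw [eind, if_pos (by rw [hab]; exact Sym2.mem_mk_left a b)]
  obtain ⟨b', hb'ne, hb'reach, hb'odd⟩ := exists_odd_degree_reachable _ (by convert hodda)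
  have hb'b : b' = b := by
    by_contra hbb
    have h1 : ((SimpleGraph.fromEdgeSet (Q' : Set (Sym2 V))).degree b' : ZMod 2)
        = eind b' ebar := hdeg' b'
    have h2 : eind b' ebar = 0 := by
      rw [eind, if_neg]
      rw [hab, Sym2.mem_iff]
      push_neg
      exact ⟨hb'ne, hbb⟩
    rw [h2, zmod2_even_iff] at h1
    exact (Nat.not_even_iff_odd.mpr hb'odd) (by convert h1)
  rw [hb'b] at hb'reach
  obtain ⟨w0⟩ := hb'reach
  let p : (SimpleGraph.fromEdgeSet (Q' : Set (Sym2 V))).Path b a := w0.reverse.toPath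
  have hedgesub : ∀ e ∈ p.val.edges, e ∈ Q' := by
    intro e he
    have h1 : e ∈ (SimpleGraph.fromEdgeSet (Q' : Set (Sym2 V))).edgeSet :=
      SimpleGraph.Walk.edges_subset_edgeSet _ he
    rw [SimpleGraph.edgeSet_fromEdgeSet] at h1
    exact_mod_cast h1.1
  have hedgeG : ∀ e ∈ p.val.edges, e ∈ G.edgeSet := by
    intro e he
    exact hQ'sub (by exact_mod_cast hedgesub e he)
  let pG : G.Walk b a := p.val.transfer G hedgeG
  have hpGpath : pG.IsPath := SimpleGraph.Walk.IsPath.transfer _ p.2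
  have hpGedges : pG.edges = p.val.edges :=
    SimpleGraph.Walk.edges_transfer _ _
  have hnotin : s(a, b) ∉ pG.edges := by
    rw [hpGedges]
    intro hmem
    have := hedgesub _ hmem
    rw [hQ'def, ← hab] at this
    exact Finset.notMem_erase ebar Q this
  have hcyc : (SimpleGraph.Walk.cons hGadj (⟨pG, hpGpath⟩ : G.Path b a).val).IsCycle :=
    SimpleGraph.Path.cons_isCycle ⟨pG, hpGpath⟩ hGadj hnotin
  refine ⟨a, SimpleGraph.Walk.cons hGadj pG, hcyc, ?_⟩
  intro e he
  rw [SimpleGraph.Walk.edges_cons] at he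
  rcases List.mem_cons.mp he with h | h
  · rw [h, ← hab]; exact hebar
  · exact Finset.mem_of_mem_erase (hedgesub e (by rw [← hpGedges]; exact h))


-- ### Part 10 : remaining support lemmas

lemma girth_le_cycle_length (G : SimpleGraph V) {a : V} {C : G.Walk a a} (hC : C.IsCycle) :
    G.girth ≤ C.length := by
  have h1 : G.egirth ≤ (C.length : ℕ∞) := by
    calc G.egirth ≤ ⨅ w : G.Walk a a, ⨅ _ : w.IsCycle, (w.length : ℕ∞) :=
          iInf_le (fun a => ⨅ w : G.Walk a a, ⨅ _ : w.IsCycle, (w.length : ℕ∞)) a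
      _ ≤ ⨅ _ : C.IsCycle, (C.length : ℕ∞) :=
          iInf_le (fun w : G.Walk a a => ⨅ _ : w.IsCycle, (w.length : ℕ∞)) C
      _ ≤ (C.length : ℕ∞) := iInf_le _ hC
  have h2 := ENat.toNat_le_toNat h1 (by simp)
  exact h2

lemma dist_le_diam' (G : SimpleGraph V) (hG : G.Connected) (a b : V) :
    G.dist a b ≤ G.diam := by
  apply SimpleGraph.dist_le_diam
  have : Nonempty V := hG.nonempty
  obtain ⟨u, v, huv⟩ := SimpleGraph.exists_edist_eq_ediam_of_finite (G := G)
  obtain ⟨W⟩ := hG u v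
  exact ne_top_of_le_ne_top (by simp : ((W.length : ℕ∞)) ≠ ⊤) (huv ▸ SimpleGraph.edist_le W)

lemma eq_of_mismatch_empty (G T : SimpleGraph V) (hG : G.Connected) (hT : T.IsTree)
    (hTG : T ≤ G) {x y : V × (nonTreeEdges G T → ZMod 2)}
    (h : mismatch G T x y = ∅) : x = y := by
  have hall : ∀ e ∈ G.edgeFinset, hcut G T e x = hcut G T e y := by
    intro e he
    by_contra hne
    have : e ∈ mismatch G T x y := by
      rw [mismatch, Finset.mem_filter]
      exact ⟨he, hne⟩
    rw [h] at this
    simp at this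
  have h1 : x.1 = y.1 := by
    have hp := mismatch_parity G T hG hT hTG x y x.1
    have hzero : ∑ e ∈ G.edgeFinset, eind x.1 e * (hcut G T e x + hcut G T e y) = 0 := by
      apply Finset.sum_eq_zero
      intro e he
      rw [hall e he]
      have : ∀ a : ZMod 2, a + a = 0 := by decide
      rw [this, mul_zero]
    rw [hzero, if_pos rfl] at hp
    by_contra hne
    rw [if_neg hne] at hp
    simp at hp
  have h2 : x.2 = y.2 := by
    funext s
    have he : (s : Sym2 V) ∈ G.edgeFinset := SimpleGraph.mem_edgeFinset.mpr s.2.1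
    have := hall (s : Sym2 V) he
    rw [hcut, hcut, dif_pos s.2, dif_pos s.2] at this
    simpa using this
  exact Prod.ext h1 h2

-- ### Part 11 : the main upper bound

lemma dist_le_c_mul (G T : SimpleGraph V) (hG : G.Connected) (hcyc : ¬ G.IsAcyclic)
    (hT : T.IsTree) (hTG : T ≤ G) :
    ∀ (k : ℕ) (x y : V × (nonTreeEdges G T → ZMod 2)), (mismatch G T x y).card = k →
    ((liftGraph G T).dist x y : ℝ) ≤ (1 + 6 * (G.diam : ℝ) / (G.girth : ℝ)) * k := by
  have hlconn := lift_connected G T hG hT hTG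
  have hg3 : 3 ≤ G.girth := SimpleGraph.three_le_girth hcyc
  have hgR : (3 : ℝ) ≤ (G.girth : ℝ) := by exact_mod_cast hg3
  have hg0 : (0 : ℝ) < (G.girth : ℝ) := by linarith
  have hD0 : (0 : ℝ) ≤ (G.diam : ℝ) := Nat.cast_nonneg _
  set c : ℝ := 1 + 6 * (G.diam : ℝ) / (G.girth : ℝ) with hc
  clear_value c
  have hc1 : 1 ≤ c := by
    rw [hc]
    have : 0 ≤ 6 * (G.diam : ℝ) / (G.girth : ℝ) := by positivity
    linarith
  intro k
  induction k using Nat.strong_induction_on with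
  | _ k ih =>
    intro x y hk
    rcases Nat.eq_zero_or_pos k with hk0 | hkpos
    · subst hk0
      have hxy : x = y := eq_of_mismatch_empty G T hG hT hTG (Finset.card_eq_zero.mp hk)
      subst hxy
      simp [SimpleGraph.dist_self]
    by_cases hA : ∃ e ∈ mismatch G T x y, x.1 ∈ e
    · -- Case A : cross a mismatched edge at the current vertex
      obtain ⟨e, heM, hxe⟩ := hA
      have heEF : e ∈ G.edgeFinset := (Finset.mem_filter.mp heM).1
      have heG : e ∈ G.edgeSet := SimpleGraph.mem_edgeFinset.mp heEF
      obtain ⟨z, hez⟩ := Sym2.mem_iff_exists.mp hxe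
      have hGadj : G.Adj x.1 z := G.mem_edgeSet.mp (hez ▸ heG)
      set q : V × (nonTreeEdges G T → ZMod 2) := (z, toggleF G T x.2 s(x.1, z)) with hq
      have hadj : (liftGraph G T).Adj x q := liftGraph_adj.mpr ⟨hGadj, rfl⟩
      have hstep : ∀ e' ∈ G.edgeFinset,
          hcut G T e' q = hcut G T e' x + (if e' = e then 1 else 0) := by
        intro e' he'
        have := hcut_step G T hT hTG hadj (SimpleGraph.mem_edgeFinset.mp he')
        rwa [show s(x.1, q.1) = e by rw [hq, hez]] at this
      have hM : mismatch G T q y = (mismatch G T x y).erase e := by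
        ext e'
        rw [Finset.mem_erase, mismatch, mismatch, Finset.mem_filter, Finset.mem_filter]
        constructor
        · rintro ⟨hEF, hne⟩
          have hs := hstep e' hEF
          by_cases hee : e' = e
          · exfalso
            subst hee
            have hxyne : hcut G T e' x ≠ hcut G T e' y := (Finset.mem_filter.mp heM).2
            rw [if_pos rfl] at hs
            have : ∀ a b : ZMod 2, a ≠ b → a + 1 = b := by decide
            exact hne (hs.trans (this _ _ hxyne))
          · rw [if_neg hee, add_zero] at hs
            exact ⟨hee, hEF, by rwa [← hs]⟩
        · rintro ⟨hee, hEF, hne⟩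
          have hs := hstep e' hEF
          rw [if_neg hee, add_zero] at hs
          exact ⟨hEF, by rwa [hs]⟩
      have hcardq : (mismatch G T q y).card = k - 1 := by
        rw [hM, Finset.card_erase_of_mem heM, hk]
      have hdq := ih (k - 1) (by omega) q y hcardq
      have htri : (liftGraph G T).dist x y ≤ 1 + (liftGraph G T).dist q y := by
        have h1 : (liftGraph G T).dist x q ≤ 1 := by
          have := SimpleGraph.dist_le (SimpleGraph.Walk.cons hadj SimpleGraph.Walk.nil)
          simpa using this
        have h2 := hlconn.dist_triangle (u := x) (v := q) (w := y)
        omega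
      have hcast : ((k - 1 : ℕ) : ℝ) = (k : ℝ) - 1 := by
        have : 1 ≤ k := hkpos
        push_cast [Nat.cast_sub this]
        ring
      have : ((liftGraph G T).dist x y : ℝ) ≤ 1 + c * ((k : ℝ) - 1) := by
        have h3 : ((liftGraph G T).dist x y : ℝ) ≤ 1 + ((liftGraph G T).dist q y : ℝ) := by
          exact_mod_cast htri
        rw [hcast] at hdq
        linarith
      have hck : (1 : ℝ) ≤ c := hc1
      have hk1 : (1 : ℝ) ≤ (k : ℝ) := by exact_mod_cast hkpos
      nlinarith
    · -- Case B : no mismatched edge at the current vertex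
      push_neg at hA
      have hparity := mismatch_parity G T hG hT hTG x y
      have hsum_mismatch : ∀ w, ∑ e ∈ G.edgeFinset, eind w e * (hcut G T e x + hcut G T e y)
          = ∑ e ∈ mismatch G T x y, eind w e := by
        intro w
        rw [mismatch, Finset.sum_filter]
        apply Finset.sum_congr rfl
        intro e he
        by_cases hmem : hcut G T e x ≠ hcut G T e y
        · rw [if_pos hmem]
          have : hcut G T e x + hcut G T e y = 1 := by
            have : ∀ a b : ZMod 2, a ≠ b → a + b = 1 := by decide
            exact this _ _ hmem
          rw [this, mul_one]
        · rw [if_neg hmem]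
          push_neg at hmem
          rw [hmem]
          have : ∀ a : ZMod 2, a + a = 0 := by decide
          rw [this, mul_zero]
      have huv : x.1 = y.1 := by
        have hp := hparity x.1
        rw [hsum_mismatch x.1] at hp
        have hzero : ∑ e ∈ mismatch G T x y, eind x.1 e = 0 := by
          apply Finset.sum_eq_zero
          intro e he
          rw [eind, if_neg (hA e he)]
        rw [hzero, if_pos rfl] at hp
        by_contra hne
        rw [if_neg hne] at hp
        simp at hp
      have hdegeven : ∀ w, ∑ e ∈ mismatch G T x y, eind w e = 0 := by
        intro w
        have hp := hparity w
        rw [hsum_mismatch w, ← huv] at hp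
        rw [hp]
        by_cases hw : w = x.1
        · simp only [if_pos hw]
          decide
        · simp [hw]
      have hMne : (mismatch G T x y).Nonempty := Finset.card_pos.mp (by omega)
      have hMsub : ((mismatch G T x y) : Set (Sym2 V)) ⊆ G.edgeSet := by
        intro e he
        have : e ∈ mismatch G T x y := by exact_mod_cast he
        exact SimpleGraph.mem_edgeFinset.mp (Finset.mem_filter.mp this).1
      obtain ⟨a, C, hCcyc, hCedges⟩ := exists_cycle_in_even_finset G hMsub hMne hdegeven
      have hCnodup : C.edges.Nodup := hCcyc.edges_nodup
      obtain ⟨Qw, hQlen⟩ := hG.exists_walk_length_eq_dist x.1 a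
      have hQdiam : Qw.length ≤ G.diam := hQlen ▸ dist_le_diam' G hG x.1 a
      set W : G.Walk x.1 x.1 := Qw.append (C.append Qw.reverse) with hW
      set z : V × (nonTreeEdges G T → ZMod 2) := (x.1, pushf G T W x.2) with hz
      have hdistxz : (liftGraph G T).dist x z ≤ 2 * Qw.length + C.length := by
        have h1 : (liftGraph G T).dist x z ≤ W.length := by
          have h0 := SimpleGraph.dist_le (liftWalk G T W x.2)
          rw [liftWalk_length] at h0
          exact h0
        have h2 : W.length = Qw.length + (C.length + Qw.length) := by
          rw [hW, SimpleGraph.Walk.length_append, SimpleGraph.Walk.length_append,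
            SimpleGraph.Walk.length_reverse]
        omega
      have hparW : ∀ e' ∈ G.edgeFinset,
          hcut G T e' z = hcut G T e' x + (if e' ∈ C.edges then 1 else 0) := by
        intro e' he'
        have h1 := hcut_liftWalk G T hT hTG W x.2 (SimpleGraph.mem_edgeFinset.mp he')
        have h2 : edgeParity e' W.edges = (if e' ∈ C.edges then 1 else 0) := by
          rw [hW, SimpleGraph.Walk.edges_append, SimpleGraph.Walk.edges_append,
            edgeParity_append, edgeParity_append, SimpleGraph.Walk.edges_reverse,
            edgeParity_reverse, edgeParity_nodup e' C.edges hCnodup]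
          have : ∀ q r : ZMod 2, q + (r + q) = r := by decide
          exact this _ _
        rw [h1, h2]
      have hMz : mismatch G T z y = mismatch G T x y \ C.edges.toFinset := by
        ext e'
        rw [Finset.mem_sdiff, mismatch, mismatch, Finset.mem_filter, Finset.mem_filter,
          List.mem_toFinset]
        constructor
        · rintro ⟨hEF, hne⟩
          have hs := hparW e' hEF
          by_cases hee : e' ∈ C.edges
          · exfalso
            have heM : e' ∈ mismatch G T x y := hCedges e' hee
            have hxyne : hcut G T e' x ≠ hcut G T e' y := (Finset.mem_filter.mp heM).2
            rw [if_pos hee] at hs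
            have : ∀ a b : ZMod 2, a ≠ b → a + 1 = b := by decide
            exact hne (hs.trans (this _ _ hxyne))
          · rw [if_neg hee, add_zero] at hs
            exact ⟨⟨hEF, by rwa [← hs]⟩, hee⟩
        · rintro ⟨⟨hEF, hne⟩, hee⟩
          have hs := hparW e' hEF
          rw [if_neg hee, add_zero] at hs
          exact ⟨hEF, by rwa [hs]⟩
      have hCsub : C.edges.toFinset ⊆ mismatch G T x y := by
        intro e he
        exact hCedges e (List.mem_toFinset.mp he)
      have hcardz : (mismatch G T z y).card = k - C.length := by
        rw [hMz, Finset.card_sdiff_of_subset hCsub, List.toFinset_card_of_nodup hCnodup,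
          SimpleGraph.Walk.length_edges, hk]
      have hLk : C.length ≤ k := by
        have := Finset.card_le_card hCsub
        rw [List.toFinset_card_of_nodup hCnodup, SimpleGraph.Walk.length_edges, hk] at this
        exact this
      have hgirthC : G.girth ≤ C.length := girth_le_cycle_length G hCcyc
      have hLpos : 0 < C.length := by omega
      have hdz := ih (k - C.length) (by omega) z y hcardz
      have htri := hlconn.dist_triangle (u := x) (v := z) (w := y)
      -- real arithmetic
      have hcast : ((k - C.length : ℕ) : ℝ) = (k : ℝ) - (C.length : ℝ) := by
        push_cast [Nat.cast_sub hLk]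
        ring
      rw [hcast] at hdz
      have hQR : (Qw.length : ℝ) ≤ (G.diam : ℝ) := by exact_mod_cast hQdiam
      have hLgR : (G.girth : ℝ) ≤ (C.length : ℝ) := by exact_mod_cast hgirthC
      have hd1 : ((liftGraph G T).dist x z : ℝ) ≤ 2 * (Qw.length : ℝ) + (C.length : ℝ) := by
        exact_mod_cast hdistxz
      have htriR : ((liftGraph G T).dist x y : ℝ)
          ≤ ((liftGraph G T).dist x z : ℝ) + ((liftGraph G T).dist z y : ℝ) := by
        exact_mod_cast htri
      have hkey : 2 * (Qw.length : ℝ) + (C.length : ℝ) ≤ c * (C.length : ℝ) := by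
        have h6 : 6 * (G.diam : ℝ) ≤ (6 * (G.diam : ℝ) / (G.girth : ℝ)) * (C.length : ℝ) := by
          have h61 : (6 * (G.diam : ℝ) / (G.girth : ℝ)) * (G.girth : ℝ) = 6 * (G.diam : ℝ) := by
            field_simp
          have h62 : (6 * (G.diam : ℝ) / (G.girth : ℝ)) * (G.girth : ℝ)
              ≤ (6 * (G.diam : ℝ) / (G.girth : ℝ)) * (C.length : ℝ) := by
            apply mul_le_mul_of_nonneg_left hLgR
            positivity
          linarith
        have hcL : c * (C.length : ℝ) = (C.length : ℝ)
            + (6 * (G.diam : ℝ) / (G.girth : ℝ)) * (C.length : ℝ) := by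
          rw [hc]; ring
        linarith
      calc ((liftGraph G T).dist x y : ℝ)
          ≤ ((liftGraph G T).dist x z : ℝ) + ((liftGraph G T).dist z y : ℝ) := htriR
        _ ≤ (2 * (Qw.length : ℝ) + (C.length : ℝ)) + c * ((k : ℝ) - (C.length : ℝ)) := by
            linarith
        _ ≤ c * (C.length : ℝ) + c * ((k : ℝ) - (C.length : ℝ)) := by linarith
        _ = c * (k : ℝ) := by ring

/-- Let `G` be a finite connected simple graph containing a cycle, `T` a spanning tree of
`G`, `G̃` the lift of `G` with respect to `T`, and `F` the cut-indicator map. Then for all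
vertices `x, y` of `G̃`:
`‖F(x) − F(y)‖₁ ≤ d_{G̃}(x,y) ≤ (1 + 6·diam(G)/girth(G))·‖F(x) − F(y)‖₁`. -/
theorem cutMap_dist_estimates {V : Type*} [Fintype V] (G T : SimpleGraph V)
    (hG : G.Connected) (hcyc : ¬ G.IsAcyclic) (hT : T.IsTree) (hTG : T ≤ G)
    (x y : V × (nonTreeEdges G T → ZMod 2)) :
    ‖cutMap G T x - cutMap G T y‖ ≤ ((liftGraph G T).dist x y : ℝ) ∧
      ((liftGraph G T).dist x y : ℝ) ≤
        (1 + 6 * (G.diam : ℝ) / (G.girth : ℝ)) * ‖cutMap G T x - cutMap G T y‖ := by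
  constructor
  · rw [norm_cutMap_sub G T x y]
    obtain ⟨W, hW⟩ := ((lift_connected G T hG hT hTG).exists_walk_length_eq_dist x y)
    have hle := mismatch_card_le_walk_length G T hT hTG W
    rw [hW] at hle
    exact_mod_cast hle
  · rw [norm_cutMap_sub G T x y]
    exact dist_le_c_mul G T hG hcyc hT hTG _ x y rfl

end
end

section
/- Let H be a finite connected simple graph with at least one edge and with at most two vertices of degree 1. Let C be the number of maximal 2-edge-connected subgraphs of H containing at least one edge, and let N be the number of maximal paths in H all of whose edges are cut edges (bridges) of H and all of whose internal vertices (if any) have degree 2 in H. Then N ≤ 2C + 1. -/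
open SimpleGraph

noncomputable section
attribute [local instance] Classical.propDecidable

variable {V : Type*}

/-- A subgraph is 2-edge-connected if (as a graph on its own vertex set) it is connected,
has at least two vertices, and has no cut edge (bridge). -/
def Subgraph.IsTwoEdgeConnected {G : SimpleGraph V} (H : G.Subgraph) : Prop :=
  H.coe.Connected ∧ 2 ≤ H.verts.ncard ∧ ∀ e, ¬ H.coe.IsBridge e

/-- A subgraph of `H` is a bridge-path if it is (the subgraph of) a nontrivial path all of
whose internal vertices have degree `2` in the ambient graph `H` and all of whose edges are
cut edges (bridges) of `H`. -/
def Subgraph.IsBridgePath {H : SimpleGraph V} [Fintype V] (P : H.Subgraph) : Prop :=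
  ∃ (u v : V) (W : H.Walk u v), W.IsPath ∧ 0 < W.length ∧ P = W.toSubgraph ∧
    (∀ w ∈ W.support, w ≠ u → w ≠ v → H.degree w = 2) ∧
    ∀ e ∈ W.edges, H.IsBridge e

set_option linter.unusedSectionVars false
namespace BPP

variable {V : Type*} [Fintype V] {H : SimpleGraph V}

/-- There is a walk from `a` to `b` avoiding the edge `e`. -/
def Avoids (H : SimpleGraph V) (e : Sym2 V) (a b : V) : Prop :=
  ∃ w : H.Walk a b, e ∉ w.edges

lemma Avoids.rfl {e : Sym2 V} {a : V} : Avoids H e a a := ⟨Walk.nil, by simp⟩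

lemma Avoids.symm {e : Sym2 V} {a b : V} (h : Avoids H e a b) : Avoids H e b a := by
  obtain ⟨w, hw⟩ := h
  exact ⟨w.reverse, by simpa [Walk.edges_reverse] using hw⟩

lemma Avoids.trans {e : Sym2 V} {a b c : V} (h : Avoids H e a b) (h' : Avoids H e b c) :
    Avoids H e a c := by
  obtain ⟨w, hw⟩ := h; obtain ⟨w', hw'⟩ := h'
  exact ⟨w.append w', by simp [Walk.edges_append, hw, hw']⟩

lemma avoids_of_adj {a b : V} {e : Sym2 V} (h : H.Adj a b) (hne : s(a, b) ≠ e) :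
    Avoids H e a b := ⟨Walk.cons h Walk.nil, by simp [Ne.symm hne]⟩

lemma isBridge_iff_adj_not_avoids {a b : V} :
    H.IsBridge s(a, b) ↔ ¬ Avoids H s(a, b) a b := by
  rw [isBridge_iff, reachable_deleteEdges_iff_exists_walk]
  exact Iff.rfl

lemma bridge_not_avoids {a b : V} (h : H.IsBridge s(a, b)) : ¬ Avoids H s(a, b) a b :=
  isBridge_iff_adj_not_avoids.mp h

private lemma avoids_dichotomy_aux {a b u z : V} (w : H.Walk u z) :
    (Avoids H s(a, b) a u ∨ Avoids H s(a, b) b u) →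
      (Avoids H s(a, b) a z ∨ Avoids H s(a, b) b z) := by
  induction w with
  | nil => exact id
  | @cons u c z h p ih =>
    intro hu
    apply ih
    by_cases he : s(u, c) = s(a, b)
    · rw [Sym2.eq_iff] at he
      rcases he with ⟨rfl, rfl⟩ | ⟨rfl, rfl⟩
      · exact Or.inr Avoids.rfl
      · exact Or.inl Avoids.rfl
    · have hstep : Avoids H s(a, b) u c := avoids_of_adj h he
      rcases hu with h1 | h1
      · exact Or.inl (h1.trans hstep)
      · exact Or.inr (h1.trans hstep)

lemma avoids_dichotomy (hconn : H.Connected) (a b z : V) :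
    Avoids H s(a, b) a z ∨ Avoids H s(a, b) b z := by
  obtain ⟨w⟩ := hconn.preconnected a z
  exact avoids_dichotomy_aux w (Or.inl Avoids.rfl)

lemma avoids_takeUntil {e : Sym2 V} {a b c : V} (w : H.Walk a b) (hw : e ∉ w.edges)
    (hc : c ∈ w.support) : Avoids H e a c :=
  ⟨w.takeUntil c hc, fun h => hw (w.edges_takeUntil_subset hc h)⟩

lemma exists_cons_of_pos_length {x y : V} (W : H.Walk x y) (h : 0 < W.length) :
    ∃ (c : V) (hadj : H.Adj x c) (t : H.Walk c y), W = Walk.cons hadj t := by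
  cases W with
  | nil => simp at h
  | @cons _ c _ ha t => exact ⟨c, ha, t, rfl⟩

lemma exists_cons_of_edge_at_start {x y m : V} (W : H.Walk x y) (hW : W.IsPath)
    (h : s(x, m) ∈ W.edges) : ∃ (hadj : H.Adj x m) (t : H.Walk m y), W = Walk.cons hadj t := by
  cases W with
  | nil => simp at h
  | @cons _ c _ h1 t =>
    rw [Walk.edges_cons, List.mem_cons] at h
    rcases h with h | h
    · rw [Sym2.congr_right] at h
      subst h
      exact ⟨h1, t, rfl⟩
    · exact absurd (t.fst_mem_support_of_mem_edges h)
        ((Walk.cons_isPath_iff h1 t).mp hW).2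

lemma eq_of_degree_two {x n d d' : V} (hdeg : H.degree x = 2) (hn : H.Adj x n)
    (hd : H.Adj x d) (hd' : H.Adj x d') (hdn : d ≠ n) (hd'n : d' ≠ n) : d = d' := by
  by_contra hne
  have hsub : ({n, d, d'} : Finset V) ⊆ H.neighborFinset x := by
    intro z hz
    simp only [Finset.mem_insert, Finset.mem_singleton] at hz
    rcases hz with rfl | rfl | rfl <;> simp [mem_neighborFinset, hn, hd, hd']
  have h3 : ({n, d, d'} : Finset V).card = 3 := by
    rw [Finset.card_insert_of_notMem (by simp [Ne.symm hdn, Ne.symm hd'n]),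
      Finset.card_insert_of_notMem (by simp [hne]), Finset.card_singleton]
  have := Finset.card_le_card hsub
  rw [h3] at this
  rw [← card_neighborFinset_eq_degree] at hdeg
  omega

lemma three_le_degree_of_adj {x p q n : V} (hp : H.Adj x p) (hq : H.Adj x q) (hn : H.Adj x n)
    (hpq : p ≠ q) (hpn : p ≠ n) (hqn : q ≠ n) : 3 ≤ H.degree x := by
  have hsub : ({n, p, q} : Finset V) ⊆ H.neighborFinset x := by
    intro z hz
    simp only [Finset.mem_insert, Finset.mem_singleton] at hz
    rcases hz with rfl | rfl | rfl <;> simp [mem_neighborFinset, hn, hp, hq]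
  have h3 : ({n, p, q} : Finset V).card = 3 := by
    rw [Finset.card_insert_of_notMem (by simp [Ne.symm hpn, Ne.symm hqn]),
      Finset.card_insert_of_notMem (by simp [hpq]), Finset.card_singleton]
  have := Finset.card_le_card hsub
  rw [h3] at this
  rwa [← card_neighborFinset_eq_degree]

lemma eq_of_degree_one {x y z : V} (hdeg : H.degree x = 1) (hy : H.Adj x y) (hz : H.Adj x z) :
    y = z := by
  rw [← card_neighborFinset_eq_degree, Finset.card_eq_one] at hdeg
  obtain ⟨a, ha⟩ := hdeg
  have h1 : y ∈ H.neighborFinset x := by simpa [mem_neighborFinset] using hy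
  have h2 : z ∈ H.neighborFinset x := by simpa [mem_neighborFinset] using hz
  rw [ha, Finset.mem_singleton] at h1 h2
  rw [h1, h2]

lemma exists_second_nbr {x n : V} (hdeg : H.degree x = 2) (hn : H.Adj x n) :
    ∃ z, H.Adj x z ∧ z ≠ n := by
  rw [← card_neighborFinset_eq_degree] at hdeg
  have hn' : n ∈ H.neighborFinset x := by simpa [mem_neighborFinset] using hn
  have : 0 < ((H.neighborFinset x).erase n).card := by
    rw [Finset.card_erase_of_mem hn', hdeg]; omega
  obtain ⟨z, hz⟩ := Finset.card_pos.mp this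
  rw [Finset.mem_erase, mem_neighborFinset] at hz
  exact ⟨z, hz.2, hz.1⟩

lemma exists_three_nbrs {x : V} (hdeg : 3 ≤ H.degree x) :
    ∃ a b c, H.Adj x a ∧ H.Adj x b ∧ H.Adj x c ∧ a ≠ b ∧ a ≠ c ∧ b ≠ c := by
  rw [← card_neighborFinset_eq_degree] at hdeg
  obtain ⟨a, ha⟩ := Finset.card_pos.mp (by omega : 0 < (H.neighborFinset x).card)
  have h2 : 0 < ((H.neighborFinset x).erase a).card := by
    rw [Finset.card_erase_of_mem ha]; omega
  obtain ⟨b, hb⟩ := Finset.card_pos.mp h2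
  have h3 : 0 < (((H.neighborFinset x).erase a).erase b).card := by
    rw [Finset.card_erase_of_mem hb, Finset.card_erase_of_mem ha]; omega
  obtain ⟨c, hc⟩ := Finset.card_pos.mp h3
  rw [Finset.mem_erase] at hb
  rw [Finset.mem_erase, Finset.mem_erase] at hc
  refine ⟨a, b, c, ?_, ?_, ?_, ?_, ?_, ?_⟩
  · exact (mem_neighborFinset _ _ _).mp ha
  · exact (mem_neighborFinset _ _ _).mp hb.2
  · exact (mem_neighborFinset _ _ _).mp hc.2.2
  · exact fun h => hb.1 h.symm
  · exact fun h => hc.2.1 h.symm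
  · exact fun h => hc.1 h.symm

lemma internal_two_edges {y z : V} :
    ∀ {x : V} (W : H.Walk x y), W.IsPath → z ∈ W.support → z ≠ x → z ≠ y →
      ∃ p q, p ≠ q ∧ s(z, p) ∈ W.edges ∧ s(z, q) ∈ W.edges := by
  intro x W
  induction W with
  | nil => intro _ hz hzx _; simp at hz; exact absurd hz hzx
  | @cons x c y h t ih =>
    intro hW hz hzx hzy
    rw [Walk.support_cons, List.mem_cons] at hz
    rcases hz with rfl | hz
    · exact absurd rfl hzx
    by_cases hzc : z = c
    · subst hzc
      cases t with
      | nil => exact absurd rfl hzy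
      | @cons _ d _ h2 t2 =>
        refine ⟨x, d, ?_, ?_, ?_⟩
        · intro hxd
          have hx : x ∉ (Walk.cons h2 t2).support := ((Walk.cons_isPath_iff h _).mp hW).2
          exact hx (by rw [hxd, Walk.support_cons]; exact List.mem_cons_of_mem _ t2.start_mem_support)
        · rw [Sym2.eq_swap]; simp
        · simp
    · obtain ⟨p, q, hpq, hp, hq⟩ :=
        ih ((Walk.cons_isPath_iff h t).mp hW).1 hz hzc hzy
      exact ⟨p, q, hpq, by simp [hp], by simp [hq]⟩

end BPP

namespace BPP
variable {V : Type*} [Fintype V] {H : SimpleGraph V}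

/-- `P` is witnessed by a path walk whose first vertex is `x` and second vertex is `n`. -/
def EndOf (P : H.Subgraph) (x n : V) : Prop :=
  ∃ (y : V) (hadj : H.Adj x n) (t : H.Walk n y),
    (Walk.cons hadj t).IsPath ∧ P = (Walk.cons hadj t).toSubgraph ∧
    (∀ w ∈ (Walk.cons hadj t).support, w ≠ x → w ≠ y → H.degree w = 2) ∧
    (∀ e ∈ (Walk.cons hadj t).edges, H.IsBridge e)

lemma isBridgePath_iff_exists_endOf {P : H.Subgraph} :
    Subgraph.IsBridgePath P ↔ ∃ x n, EndOf P x n := by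
  constructor
  · rintro ⟨u, v, W, hp, hlen, heq, hint, hbr⟩
    obtain ⟨c, hadj, t, rfl⟩ := exists_cons_of_pos_length W hlen
    exact ⟨u, c, v, hadj, t, hp, heq, hint, hbr⟩
  · rintro ⟨x, n, y, hadj, t, hp, heq, hint, hbr⟩
    exact ⟨x, y, Walk.cons hadj t, hp, by simp, heq, hint, hbr⟩

lemma EndOf.adj {P : H.Subgraph} {x n : V} (h : EndOf P x n) : H.Adj x n := by
  obtain ⟨y, hadj, t, _⟩ := h; exact hadj

lemma EndOf.mem_edgeSet {P : H.Subgraph} {x n : V} (h : EndOf P x n) :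
    s(x, n) ∈ P.edgeSet := by
  obtain ⟨y, hadj, t, hp, heq, _⟩ := h
  rw [heq, Walk.mem_edges_toSubgraph]
  simp

lemma EndOf.isBridge {P : H.Subgraph} {x n : V} (h : EndOf P x n) : H.IsBridge s(x, n) := by
  obtain ⟨y, hadj, t, hp, heq, hint, hbr⟩ := h
  exact hbr _ (by simp)

lemma EndOf.mem_verts {P : H.Subgraph} {x n : V} (h : EndOf P x n) : x ∈ P.verts := by
  obtain ⟨y, hadj, t, hp, heq, _⟩ := h
  rw [heq]
  exact (Walk.cons hadj t).start_mem_verts_toSubgraph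

lemma EndOf.unique_nbr {P : H.Subgraph} {x n : V} (h : EndOf P x n) :
    ∀ m, P.Adj x m → m = n := by
  obtain ⟨y, hadj, t, hp, heq, _⟩ := h
  intro m hm
  rw [heq] at hm
  have hmem : s(x, m) ∈ (Walk.cons hadj t).edges := by
    rw [← Walk.mem_edges_toSubgraph]
    exact Subgraph.mem_edgeSet.mpr hm
  rw [Walk.edges_cons, List.mem_cons] at hmem
  rcases hmem with hmem | hmem
  · rwa [Sym2.congr_right] at hmem
  · exact absurd (t.fst_mem_support_of_mem_edges hmem)
      ((Walk.cons_isPath_iff hadj t).mp hp).2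

lemma exists_both_ends {P : H.Subgraph} (hP : Subgraph.IsBridgePath P) :
    ∃ u nu v nv, u ≠ v ∧ EndOf P u nu ∧ EndOf P v nv ∧
      Avoids H s(u, nu) nu v ∧ Avoids H s(v, nv) nv u ∧
      (∀ z m, EndOf P z m → z = u ∨ z = v) ∧
      (∀ z ∈ P.verts, z ≠ u → z ≠ v → H.degree z = 2) := by
  obtain ⟨u, v, W, hp, hlen, heq, hint, hbr⟩ := hP
  obtain ⟨c, hadj, t, rfl⟩ := exists_cons_of_pos_length W hlen
  have hxnot : u ∉ t.support := ((Walk.cons_isPath_iff hadj t).mp hp).2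
  have huv : u ≠ v := by
    rintro rfl
    exact hxnot t.end_mem_support
  have hEu : EndOf P u c := ⟨v, hadj, t, hp, heq, hint, hbr⟩
  -- reverse data
  have hprev : (Walk.cons hadj t).reverse.IsPath := hp.reverse
  have hlenrev : 0 < (Walk.cons hadj t).reverse.length := by
    rw [Walk.length_reverse]; simp
  obtain ⟨d, hadj2, t2, hrev⟩ := exists_cons_of_pos_length _ hlenrev
  have hvnot : v ∉ t2.support := by
    have := hprev
    rw [hrev, Walk.cons_isPath_iff] at this
    exact this.2
  have hEv : EndOf P v d := by
    refine ⟨u, hadj2, t2, ?_, ?_, ?_, ?_⟩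
    · rw [← hrev]; exact hprev
    · rw [← hrev, Walk.toSubgraph_reverse]; exact heq
    · intro w hw hwv hwu
      rw [← hrev, Walk.support_reverse, List.mem_reverse] at hw
      exact hint w hw hwu hwv
    · intro e he
      rw [← hrev, Walk.edges_reverse, List.mem_reverse] at he
      exact hbr e he
  refine ⟨u, c, v, d, huv, hEu, hEv, ?_, ?_, ?_, ?_⟩
  · exact ⟨t, fun hh => hxnot (t.fst_mem_support_of_mem_edges hh)⟩
  · exact ⟨t2, fun hh => hvnot (t2.fst_mem_support_of_mem_edges hh)⟩
  · intro z m hE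
    by_contra hcon
    push_neg at hcon
    have hzv : z ∈ (Walk.cons hadj t).support := by
      have := hE.mem_verts
      rwa [heq, Walk.mem_verts_toSubgraph] at this
    obtain ⟨p, q, hpq, hpe, hqe⟩ :=
      internal_two_edges (Walk.cons hadj t) hp hzv hcon.1 hcon.2
    have hadjp : P.Adj z p := by
      rw [heq]
      exact Subgraph.mem_edgeSet.mp ((Walk.mem_edges_toSubgraph _).mpr hpe)
    have hadjq : P.Adj z q := by
      rw [heq]
      exact Subgraph.mem_edgeSet.mp ((Walk.mem_edges_toSubgraph _).mpr hqe)
    exact hpq ((hE.unique_nbr p hadjp).trans (hE.unique_nbr q hadjq).symm)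
  · intro z hz hzu hzv
    rw [heq, Walk.mem_verts_toSubgraph] at hz
    exact hint z hz hzu hzv

lemma exists_good_end (hconn : H.Connected) (r : V) {P : H.Subgraph}
    (hP : Subgraph.IsBridgePath P) :
    ∃ x n, EndOf P x n ∧ ¬ Avoids H s(x, n) x r := by
  obtain ⟨u, nu, v, nv, huv, hEu, hEv, Tu, Tv, _, _⟩ := exists_both_ends hP
  by_cases hu : Avoids H s(u, nu) u r
  · by_cases hv : Avoids H s(v, nv) v r
    · exfalso
      obtain ⟨w, hw⟩ := hu
      by_cases hvw : s(v, nv) ∈ w.edges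
      · have hvsup : v ∈ w.support := w.fst_mem_support_of_mem_edges hvw
        have h1 : Avoids H s(u, nu) u v := avoids_takeUntil w hw hvsup
        exact bridge_not_avoids hEu.isBridge (h1.trans Tu.symm)
      · have h1 : Avoids H s(v, nv) u r := ⟨w, hvw⟩
        exact bridge_not_avoids hEv.isBridge ((hv.trans h1.symm).trans Tv.symm)
    · exact ⟨v, nv, hEv, hv⟩
  · exact ⟨u, nu, hEu, hu⟩

end BPP

namespace BPP
variable {V : Type*} [Fintype V] {H : SimpleGraph V}

lemma cons_nil_toSubgraph_le {x c y : V} (h1 : H.Adj x c) (h2 : H.Adj x c) (t : H.Walk c y) :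
    (Walk.cons h1 Walk.nil).toSubgraph ≤ (Walk.cons h2 t).toSubgraph := by
  simp only [Walk.toSubgraph]
  apply sup_le
  · apply SimpleGraph.subgraphOfAdj_le_of_adj
    exact Subgraph.sup_adj.mpr (Or.inl (by simp))
  · rw [SimpleGraph.singletonSubgraph_le_iff]
    simp only [Subgraph.verts_sup, Set.mem_union]
    right
    rw [Walk.mem_verts_toSubgraph]
    exact t.start_mem_support

lemma not_start_eq_end_of_cons_path {x c y : V} (h : H.Adj x c) (t : H.Walk c y)
    (hp : (Walk.cons h t).IsPath) (ht : 0 < t.length) : c ≠ y := by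
  rintro rfl
  have htp : t.IsPath := ((Walk.cons_isPath_iff h t).mp hp).1
  obtain ⟨d, hadj, t2, rfl⟩ := exists_cons_of_pos_length t ht
  exact ((Walk.cons_isPath_iff hadj t2).mp htp).2 t2.end_mem_support

lemma det : ∀ (k : ℕ) {x c y y' : V} (h1 : H.Adj x c) (t : H.Walk c y) (h2 : H.Adj x c)
    (t' : H.Walk c y'), t.length ≤ k →
    (Walk.cons h1 t).IsPath → (Walk.cons h2 t').IsPath →
    (∀ w ∈ (Walk.cons h1 t).support, w ≠ x → w ≠ y → H.degree w = 2) →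
    (∀ w ∈ (Walk.cons h2 t').support, w ≠ x → w ≠ y' → H.degree w = 2) →
    (Walk.cons h1 t).toSubgraph ≤ (Walk.cons h2 t').toSubgraph ∨
      (Walk.cons h2 t').toSubgraph ≤ (Walk.cons h1 t).toSubgraph := by
  intro k
  induction k with
  | zero =>
    intro x c y y' h1 t h2 t' hlen _ _ _ _
    cases t with
    | nil => exact Or.inl (cons_nil_toSubgraph_le h1 h2 t')
    | cons _ _ => simp at hlen
  | succ k ih =>
    intro x c y y' h1 t h2 t' hlen hp1 hp2 hint1 hint2
    cases t with
    | nil => exact Or.inl (cons_nil_toSubgraph_le h1 h2 t')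
    | @cons _ d _ hcd t2 =>
      cases t' with
      | nil => exact Or.inr (cons_nil_toSubgraph_le h2 h1 (Walk.cons hcd t2))
      | @cons _ d' _ hcd' t2' =>
        have hcy : c ≠ y := not_start_eq_end_of_cons_path h1 _ hp1 (by simp)
        have hcy' : c ≠ y' := not_start_eq_end_of_cons_path h2 _ hp2 (by simp)
        have hdegc : H.degree c = 2 := by
          refine hint1 c ?_ (Ne.symm h1.ne) hcy
          rw [Walk.support_cons]
          exact List.mem_cons_of_mem _ (Walk.start_mem_support _)
        have hdx : d ≠ x := by
          intro hdx
          apply ((Walk.cons_isPath_iff h1 _).mp hp1).2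
          rw [← hdx, Walk.support_cons]
          exact List.mem_cons_of_mem _ t2.start_mem_support
        have hd'x : d' ≠ x := by
          intro hdx
          apply ((Walk.cons_isPath_iff h2 _).mp hp2).2
          rw [← hdx, Walk.support_cons]
          exact List.mem_cons_of_mem _ t2'.start_mem_support
        have hdd' : d = d' := eq_of_degree_two hdegc h1.symm hcd hcd' hdx hd'x
        subst hdd'
        have hint1' : ∀ w ∈ (Walk.cons hcd t2).support, w ≠ c → w ≠ y → H.degree w = 2 := by
          intro w hw hwc hwy
          have hwx : w ≠ x := by
            rintro rfl
            exact ((Walk.cons_isPath_iff h1 _).mp hp1).2 hw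
          exact hint1 w (by rw [Walk.support_cons]; exact List.mem_cons_of_mem _ hw) hwx hwy
        have hint2' : ∀ w ∈ (Walk.cons hcd' t2').support, w ≠ c → w ≠ y' → H.degree w = 2 := by
          intro w hw hwc hwy
          have hwx : w ≠ x := by
            rintro rfl
            exact ((Walk.cons_isPath_iff h2 _).mp hp2).2 hw
          exact hint2 w (by rw [Walk.support_cons]; exact List.mem_cons_of_mem _ hw) hwx hwy
        have := ih hcd t2 hcd' t2' (by simpa using hlen)
          ((Walk.cons_isPath_iff h1 _).mp hp1).1 ((Walk.cons_isPath_iff h2 _).mp hp2).1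
          hint1' hint2'
        rcases this with hle | hle
        · left
          show (Walk.cons h1 (Walk.cons hcd t2)).toSubgraph ≤ _
          simp only [Walk.toSubgraph]
          exact sup_le_sup_left (by simpa [Walk.toSubgraph] using hle) _
        · right
          simp only [Walk.toSubgraph]
          exact sup_le_sup_left (by simpa [Walk.toSubgraph] using hle) _

lemma eq_of_endOf_same {P Q : H.Subgraph} (hP : Maximal Subgraph.IsBridgePath P)
    (hQ : Maximal Subgraph.IsBridgePath Q) {x n : V} (hE : EndOf P x n) (hE' : EndOf Q x n) :
    P = Q := by
  obtain ⟨y, h1, t, hp1, heq1, hint1, _⟩ := hE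
  obtain ⟨y', h2, t', hp2, heq2, hint2, _⟩ := hE'
  rcases det t.length h1 t h2 t' le_rfl hp1 hp2 hint1 hint2 with hle | hle
  · rw [← heq1, ← heq2] at hle
    exact le_antisymm hle (hP.2 hQ.1 hle)
  · rw [← heq1, ← heq2] at hle
    exact le_antisymm (hQ.2 hP.1 hle) hle

/-- Injectivity core: two maximal bridge paths whose chosen "away-from-`r`" ends can reach
each other avoiding the respective end edges must be equal. -/
lemma inj_core (hconn : H.Connected) {r : V} {P Q : H.Subgraph}
    (hP : Maximal Subgraph.IsBridgePath P) (hQ : Maximal Subgraph.IsBridgePath Q)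
    {x n x' n' : V} (hE : EndOf P x n) (hE' : EndOf Q x' n')
    (hr : ¬ Avoids H s(x, n) x r) (hr' : ¬ Avoids H s(x', n') x' r)
    (h1 : Avoids H s(x, n) x x') (h2 : Avoids H s(x', n') x' x) : P = Q := by
  by_cases hee : s(x', n') = s(x, n)
  · rw [Sym2.eq_iff] at hee
    rcases hee with ⟨hx, hn⟩ | ⟨hx, hn⟩
    · subst hx; subst hn
      exact eq_of_endOf_same hP hQ hE hE'
    · exfalso
      subst hx; subst hn
      exact bridge_not_avoids hE.isBridge h1
  · exfalso
    have hxn' : Avoids H s(x, n) x' n' := avoids_of_adj hE'.adj hee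
    have hrn' : Avoids H s(x', n') n' r := by
      rcases avoids_dichotomy hconn x' n' r with h | h
      · exact absurd h hr'
      · exact h
    obtain ⟨w, hw⟩ := hrn'
    by_cases hew : s(x, n) ∈ w.edges
    · have hxsup : x ∈ w.support := w.fst_mem_support_of_mem_edges hew
      have h3 : Avoids H s(x', n') n' x := avoids_takeUntil w hw hxsup
      exact bridge_not_avoids hE'.isBridge (h2.trans h3.symm)
    · have h3 : Avoids H s(x, n) n' r := ⟨w, hew⟩
      exact hr ((h1.trans hxn').trans h3)

lemma classify_end {P : H.Subgraph} (hP : Maximal Subgraph.IsBridgePath P) {x n : V}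
    (hE : EndOf P x n) :
    H.degree x = 1 ∨ (∃ z, H.Adj x z ∧ ¬ H.IsBridge s(x, z)) ∨ 3 ≤ H.degree x := by
  by_cases hd1 : H.degree x = 1
  · exact Or.inl hd1
  by_cases hnb : ∃ z, H.Adj x z ∧ ¬ H.IsBridge s(x, z)
  · exact Or.inr (Or.inl hnb)
  push_neg at hnb
  right; right
  have hd0 : 0 < H.degree x := by
    rw [degree_pos_iff_exists_adj]
    exact ⟨n, hE.adj⟩
  by_contra hd3
  have hd2 : H.degree x = 2 := by omega
  obtain ⟨z, hz, hzn⟩ := exists_second_nbr hd2 hE.adj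
  have hzbr : H.IsBridge s(x, z) := hnb z hz
  obtain ⟨y, h1, t, hp, heq, hint, hbr⟩ := hE
  set W := Walk.cons h1 t with hW
  have hnotedge : s(x, z) ∉ W.edges := by
    intro hmem
    rw [hW, Walk.edges_cons, List.mem_cons] at hmem
    rcases hmem with hmem | hmem
    · rw [Sym2.congr_right] at hmem
      exact hzn hmem
    · exact ((Walk.cons_isPath_iff h1 t).mp hp).2 (t.fst_mem_support_of_mem_edges hmem)
  have hznot : z ∉ W.support := by
    intro hzsup
    by_cases hzy : z = y
    · subst hzy
      have hcyc : (Walk.cons hz.symm W).IsCycle := by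
        rw [Walk.cons_isCycle_iff]
        refine ⟨hp, fun hmem => hnotedge (by rwa [Sym2.eq_swap] at hmem)⟩
      have hmm : s(x, z) ∈ (Walk.cons hz.symm W).edges := by
        rw [Walk.edges_cons, Sym2.eq_swap]
        exact List.mem_cons_self
      exact hzbr.notMem_edges_of_isCycle hcyc hmm
    · have hzx : z ≠ x := hz.ne'
      obtain ⟨p, q, hpq, hpe, hqe⟩ := internal_two_edges W hp hzsup hzx hzy
      have hpx : p ≠ x := by
        rintro rfl
        exact hnotedge (by rwa [Sym2.eq_swap] at hpe)
      have hqx : q ≠ x := by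
        rintro rfl
        exact hnotedge (by rwa [Sym2.eq_swap] at hqe)
      have h3 : 3 ≤ H.degree z :=
        three_le_degree_of_adj (W.adj_of_mem_edges hpe) (W.adj_of_mem_edges hqe) hz.symm
          hpq hpx hqx
      have := hint z hzsup hzx hzy
      omega
  -- extension walk
  have hext : Subgraph.IsBridgePath (Walk.cons hz.symm W).toSubgraph := by
    refine ⟨z, y, Walk.cons hz.symm W, ?_, by simp, rfl, ?_, ?_⟩
    · rw [Walk.cons_isPath_iff]
      exact ⟨hp, hznot⟩
    · intro w hw hwz hwy
      rw [Walk.support_cons, List.mem_cons] at hw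
      rcases hw with rfl | hw
      · exact absurd rfl hwz
      · by_cases hwx : w = x
        · rw [hwx]; exact hd2
        · exact hint w hw hwx hwy
    · intro e he
      rw [Walk.edges_cons, List.mem_cons] at he
      rcases he with rfl | he
      · rwa [Sym2.eq_swap]
      · exact hbr e he
  have hle : P ≤ (Walk.cons hz.symm W).toSubgraph := by
    rw [heq]
    show W.toSubgraph ≤ (Walk.cons hz.symm W).toSubgraph
    simp only [Walk.toSubgraph]
    exact le_sup_right
  have hle2 : (Walk.cons hz.symm W).toSubgraph ≤ P := hP.2 hext hle
  have hzP : z ∈ P.verts := hle2.1 (Walk.start_mem_verts_toSubgraph _)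
  rw [heq, Walk.mem_verts_toSubgraph] at hzP
  exact hznot hzP

end BPP

namespace BPP
variable {V : Type*} [Fintype V] {H : SimpleGraph V}

instance : Finite H.Subgraph :=
  Finite.of_injective (fun K => (K.verts, K.Adj))
    (fun a b h => Subgraph.ext (congrArg Prod.fst h) (congrArg Prod.snd h))

lemma exists_maximal_above {α : Type*} [Finite α] [PartialOrder α] (Pr : α → Prop) (a : α)
    (h : Pr a) : ∃ m, a ≤ m ∧ Maximal Pr m := by
  obtain ⟨m, ⟨ham, hm⟩, hmin⟩ :=
    (Finite.to_wellFoundedGT (α := α)).wf.has_min {b | a ≤ b ∧ Pr b} ⟨a, le_rfl, h⟩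
  refine ⟨m, ham, hm, fun y hy hle => ?_⟩
  by_contra hyx
  exact hmin y ⟨le_trans ham hle, hy⟩ (lt_of_le_not_ge hle hyx)

lemma exists_maximal_bridgePath {x z : V} (hadj : H.Adj x z) (hbr : H.IsBridge s(x, z)) :
    ∃ P : H.Subgraph, Maximal Subgraph.IsBridgePath P ∧ s(x, z) ∈ P.edgeSet ∧ x ∈ P.verts := by
  have hbp : Subgraph.IsBridgePath (Walk.cons hadj Walk.nil).toSubgraph := by
    refine ⟨x, z, Walk.cons hadj Walk.nil, ?_, by simp, rfl, ?_, ?_⟩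
    · rw [Walk.cons_isPath_iff]
      simp [hadj.ne]
    · intro w hw h1 h2
      simp only [Walk.support_cons, Walk.support_nil, List.mem_cons, List.mem_singleton] at hw
      rcases hw with rfl | rfl | h
      · exact absurd rfl h1
      · exact absurd rfl h2
      · simp at h
    · intro e he
      simp only [Walk.edges_cons, Walk.edges_nil, List.mem_singleton] at he
      rwa [he]
  obtain ⟨P, hle, hmax⟩ := exists_maximal_above Subgraph.IsBridgePath _ hbp
  refine ⟨P, hmax, ?_, hle.1 (Walk.start_mem_verts_toSubgraph _)⟩
  apply Subgraph.edgeSet_mono hle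
  rw [Walk.mem_edges_toSubgraph]
  simp

lemma exists_endOf_of_mem_verts {P : H.Subgraph} (hP : Maximal Subgraph.IsBridgePath P)
    {x : V} (hx : x ∈ P.verts) (hd2 : H.degree x ≠ 2) : ∃ n, EndOf P x n := by
  obtain ⟨u, nu, v, nv, huv, hEu, hEv, _, _, _, hintv⟩ := exists_both_ends hP.1
  by_cases hxu : x = u
  · exact ⟨nu, hxu ▸ hEu⟩
  by_cases hxv : x = v
  · exact ⟨nv, hxv ▸ hEv⟩
  exact absurd (hintv x hx hxu hxv) hd2

lemma not_isBridge_of_mem_cycle {u : V} {c : H.Walk u u} (hc : c.IsCycle) {e : Sym2 V}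
    (he : e ∈ c.edges) : ¬ H.IsBridge e :=
  fun hbr => hbr.notMem_edges_of_isCycle hc he

lemma not_isBridge_of_mem_twoEdgeConnected {K : H.Subgraph}
    (hK : Subgraph.IsTwoEdgeConnected K) {e : Sym2 V} (he : e ∈ K.edgeSet) :
    ¬ H.IsBridge e := by
  revert he
  refine Sym2.ind (fun a b he => ?_) e
  have hadj : K.Adj a b := Subgraph.mem_edgeSet.mp he
  have hcoe : K.coe.Adj ⟨a, K.edge_vert hadj⟩ ⟨b, K.edge_vert hadj.symm⟩ := hadj
  have hnb := hK.2.2 s(⟨a, K.edge_vert hadj⟩, ⟨b, K.edge_vert hadj.symm⟩)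
  rw [isBridge_iff_forall_cycle_notMem hcoe] at hnb
  push_neg at hnb
  obtain ⟨u, p, hcyc, hmem⟩ := hnb
  have hcyc' : (p.map K.hom).IsCycle :=
    (Walk.map_isCycle_iff_of_injective Subgraph.hom_injective).mpr hcyc
  apply not_isBridge_of_mem_cycle hcyc'
  rw [Walk.edges_map (f := K.hom), List.mem_map]
  exact ⟨_, hmem, Sym2.map_pair_eq _ _ _⟩

lemma twoEdgeConnected_avoids {K : H.Subgraph} (hK : Subgraph.IsTwoEdgeConnected K)
    {x x' : V} (hx : x ∈ K.verts) (hx' : x' ∈ K.verts) {e : Sym2 V} (hbr : H.IsBridge e) :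
    Avoids H e x x' := by
  obtain ⟨w⟩ := hK.1.preconnected ⟨x, hx⟩ ⟨x', hx'⟩
  refine ⟨w.map K.hom, fun hmem => ?_⟩
  change e ∈ (w.map K.hom).edges at hmem
  rw [Walk.edges_map (f := K.hom), List.mem_map] at hmem
  obtain ⟨ee, hee, heq⟩ := hmem
  have hKedge : e ∈ K.edgeSet := by
    rw [← heq]
    revert hee
    refine Sym2.ind (fun aa bb hee => ?_) ee
    rw [Sym2.map_pair_eq]
    exact Subgraph.mem_edgeSet.mpr (w.adj_of_mem_edges hee)
  exact not_isBridge_of_mem_twoEdgeConnected hK hKedge hbr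

lemma cycle_split {a b : V} (c : H.Walk a a) (hc : c.IsCycle) (he : s(a, b) ∈ c.edges) :
    ∃ t : H.Walk b a, (∀ e' ∈ t.edges, e' ∈ c.edges ∧ e' ≠ s(a, b)) ∧
      (∀ z ∈ c.support, z ∈ t.support) ∧ (∀ z ∈ t.support, z ∈ c.support) := by
  cases c with
  | nil => simp at he
  | @cons _ w _ h1 t1 =>
    have hiff := (Walk.cons_isCycle_iff t1 h1).mp hc
    by_cases hbw : b = w
    · subst hbw
      refine ⟨t1, fun e' he' => ⟨by simp [he'], fun hEq => hiff.2 (hEq ▸ he')⟩, ?_, ?_⟩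
      · intro z hz
        rw [Walk.support_cons, List.mem_cons] at hz
        rcases hz with rfl | hz
        · exact t1.end_mem_support
        · exact hz
      · intro z hz
        rw [Walk.support_cons]
        exact List.mem_cons_of_mem _ hz
    · have het1 : s(a, b) ∈ t1.edges := by
        rw [Walk.edges_cons, List.mem_cons] at he
        rcases he with he | he
        · rw [Sym2.congr_right] at he
          exact absurd he hbw
        · exact he
      have hrevp : t1.reverse.IsPath := hiff.1.reverse
      have hrev_e : s(a, b) ∈ t1.reverse.edges := by
        rw [Walk.edges_reverse, List.mem_reverse]; exact het1
      obtain ⟨hadj, t2, hdec⟩ := exists_cons_of_edge_at_start t1.reverse hrevp hrev_e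
      have hanot : a ∉ t2.support := by
        have := hrevp; rw [hdec, Walk.cons_isPath_iff] at this; exact this.2
      refine ⟨t2.concat h1.symm, ?_, ?_, ?_⟩
      · intro e' he'
        rw [Walk.edges_concat, List.concat_eq_append, List.mem_append] at he'
        rcases he' with he' | he'
        · have h2 : e' ∈ t1.edges := by
            rw [← List.mem_reverse, ← Walk.edges_reverse, hdec, Walk.edges_cons]
            exact List.mem_cons_of_mem _ he'
          refine ⟨by simp [h2], fun hEq => ?_⟩
          subst hEq
          exact hanot (t2.fst_mem_support_of_mem_edges he')
        · rw [List.mem_singleton] at he'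
          subst he'
          constructor
          · rw [Sym2.eq_swap]; simp
          · intro hEq
            rw [Sym2.eq_iff] at hEq
            rcases hEq with ⟨hEq, _⟩ | ⟨hEq, h2⟩
            · exact h1.ne hEq.symm
            · exact hbw (hEq.symm)
      · intro z hz
        have hmemt : ∀ u, u ∈ t2.support ∨ u = a → u ∈ (t2.concat h1.symm).support := by
          intro u hu
          rw [Walk.support_concat, List.mem_append]
          rcases hu with hu | rfl
          · exact Or.inl hu
          · exact Or.inr (List.mem_singleton_self _)
        rw [Walk.support_cons, List.mem_cons] at hz
        rcases hz with rfl | hz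
        · exact hmemt _ (Or.inr rfl)
        · have : z ∈ t1.reverse.support := by
            rw [Walk.support_reverse, List.mem_reverse]; exact hz
          rw [hdec, Walk.support_cons, List.mem_cons] at this
          rcases this with rfl | hz2
          · exact hmemt _ (Or.inr rfl)
          · exact hmemt _ (Or.inl hz2)
      · intro z hz
        rw [Walk.support_concat, List.mem_append] at hz
        rcases hz with hz | hz
        · have : z ∈ t1.reverse.support := by
            rw [hdec, Walk.support_cons]
            exact List.mem_cons_of_mem _ hz
          rw [Walk.support_reverse, List.mem_reverse] at this
          rw [Walk.support_cons]
          exact List.mem_cons_of_mem _ this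
        · rw [List.mem_singleton] at hz
          subst hz
          exact Walk.start_mem_support _

end BPP

namespace BPP
variable {V : Type*} [Fintype V] {H : SimpleGraph V}

lemma isTwoEdgeConnected_toSubgraph_of_isCycle {y : V} {c : H.Walk y y} (hc : c.IsCycle) :
    Subgraph.IsTwoEdgeConnected c.toSubgraph := by
  refine ⟨(c.toSubgraph_connected).coe, ?_, ?_⟩
  · cases c with
    | nil => exact absurd rfl (hc.ne_nil)
    | @cons _ w _ h t =>
      rw [show (2 : ℕ) ≤ _ ↔ 1 < (Walk.cons h t).toSubgraph.verts.ncard from Iff.rfl,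
        Set.one_lt_ncard (Set.toFinite _)]
      refine ⟨y, ?_, w, ?_, h.ne⟩
      · exact Walk.start_mem_verts_toSubgraph _
      · rw [Walk.mem_verts_toSubgraph, Walk.support_cons]
        exact List.mem_cons_of_mem _ t.start_mem_support
  · intro ee
    refine Sym2.ind (fun aa bb => ?_) ee
    intro hbr
    have hadjcoe : c.toSubgraph.coe.Adj aa bb := by
      by_contra hna
      apply isBridge_iff.mp hbr
      rw [reachable_deleteEdges_iff_exists_walk]
      obtain ⟨p⟩ := (c.toSubgraph_connected).coe.preconnected aa bb
      exact ⟨p, fun hm => hna (p.adj_of_mem_edges hm)⟩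
    have hnr : ¬ (c.toSubgraph.coe \ fromEdgeSet {s(aa, bb)}).Reachable aa bb :=
      isBridge_iff.mp hbr
    set a : V := (aa : V) with ha
    set b : V := (bb : V) with hb
    have hKadj : c.toSubgraph.Adj a b := hadjcoe
    have hce : s(a, b) ∈ c.edges := by
      rw [← Walk.mem_edges_toSubgraph]
      exact Subgraph.mem_edgeSet.mpr hKadj
    have hasup : a ∈ c.support := c.fst_mem_support_of_mem_edges hce
    have hc0 : (c.rotate a hasup).IsCycle := hc.rotate hasup
    have he0 : s(a, b) ∈ (c.rotate a hasup).edges := by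
      rw [(Walk.rotate_edges c a hasup).mem_iff]
      exact hce
    obtain ⟨t, hedges, hsup1, hsup2⟩ := cycle_split _ hc0 he0
    have hrotsub : (c.rotate a hasup).toSubgraph = c.toSubgraph := Walk.toSubgraph_rotate c hasup
    -- t.toSubgraph ≤ delete
    have htle : t.toSubgraph ≤ c.toSubgraph.deleteEdges {s(a, b)} := by
      constructor
      · intro z hz
        rw [Walk.mem_verts_toSubgraph] at hz
        rw [Subgraph.deleteEdges_verts, ← hrotsub, Walk.verts_toSubgraph]
        exact hsup2 z hz
      · intro p q hpq
        have hmem : s(p, q) ∈ t.edges := by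
          rw [← Walk.mem_edges_toSubgraph]
          exact Subgraph.mem_edgeSet.mpr hpq
        obtain ⟨hmem2, hne⟩ := hedges _ hmem
        rw [Subgraph.deleteEdges_adj]
        constructor
        · rw [← hrotsub]
          exact Subgraph.mem_edgeSet.mp ((Walk.mem_edges_toSubgraph _).mpr hmem2)
        · simpa using hne
      -- le is a structure? Subgraph le is def verts ⊆ ∧ adj →
    have hverts : t.toSubgraph.verts = (c.toSubgraph.deleteEdges {s(a, b)}).verts := by
      rw [Subgraph.deleteEdges_verts, ← hrotsub, Walk.verts_toSubgraph, Walk.verts_toSubgraph]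
      ext z
      exact ⟨fun hz => hsup2 z hz, fun hz => hsup1 z hz⟩
    have hDconn : (c.toSubgraph.deleteEdges {s(a, b)}).Connected :=
      (t.toSubgraph_connected).mono htle hverts
    -- build hom into (coe \ fromEdgeSet {s(aa,bb)})
    have haV : a ∈ (c.toSubgraph.deleteEdges {s(a, b)}).verts := by
      rw [Subgraph.deleteEdges_verts]; exact aa.2
    have hbV : b ∈ (c.toSubgraph.deleteEdges {s(a, b)}).verts := by
      rw [Subgraph.deleteEdges_verts]; exact bb.2
    have hreach : (c.toSubgraph.deleteEdges {s(a, b)}).coe.Reachable ⟨a, haV⟩ ⟨b, hbV⟩ :=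
      hDconn.coe.preconnected _ _
    have hFadj : ∀ (p q : (c.toSubgraph.deleteEdges {s(a, b)}).verts),
        (c.toSubgraph.deleteEdges {s(a, b)}).coe.Adj p q →
        (c.toSubgraph.coe \ fromEdgeSet {s(aa, bb)}).Adj ⟨p.1, p.2⟩ ⟨q.1, q.2⟩ := by
      rintro ⟨p, hp⟩ ⟨q, hq⟩ hpq
      have hpq' : (c.toSubgraph.deleteEdges {s(a, b)}).Adj p q := hpq
      rw [Subgraph.deleteEdges_adj] at hpq'
      rw [sdiff_adj, fromEdgeSet_adj]
      refine ⟨hpq'.1, ?_⟩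
      rintro ⟨hEq, -⟩
      apply hpq'.2
      have := congrArg (Sym2.map (Subtype.val : c.toSubgraph.verts → V)) hEq
      rw [Sym2.map_pair_eq, Sym2.map_pair_eq] at this
      simpa using this
    have hmap := hreach.map
      (⟨fun z => (⟨z.1, z.2⟩ : c.toSubgraph.verts), fun h => hFadj _ _ h⟩ :
        (c.toSubgraph.deleteEdges {s(a, b)}).coe →g
          (c.toSubgraph.coe \ fromEdgeSet {s(aa, bb)}))
    apply hnr
    convert hmap using 2 <;> exact Subtype.ext rfl

lemma exists_maximal_component {x z : V} (hadj : H.Adj x z) (hnb : ¬ H.IsBridge s(x, z)) :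
    ∃ K : H.Subgraph, Maximal Subgraph.IsTwoEdgeConnected K ∧ K.edgeSet.Nonempty ∧
      x ∈ K.verts := by
  have havd : Avoids H s(x, z) x z := by
    by_contra hav
    exact hnb (isBridge_iff_adj_not_avoids.mpr hav)
  obtain ⟨w, hw⟩ := havd
  have hp : w.toPath.1.IsPath := w.toPath.2
  have hnc : s(z, x) ∉ w.toPath.1.edges := by
    intro hmem
    apply hw
    apply Walk.edges_toPath_subset
    rwa [Sym2.eq_swap] at hmem
  have hcyc : (Walk.cons hadj.symm w.toPath.1).IsCycle := by
    rw [Walk.cons_isCycle_iff]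
    exact ⟨hp, hnc⟩
  have h2ec := isTwoEdgeConnected_toSubgraph_of_isCycle hcyc
  obtain ⟨K, hle, hmax⟩ := exists_maximal_above Subgraph.IsTwoEdgeConnected _ h2ec
  refine ⟨K, hmax, ?_, ?_⟩
  · refine ⟨s(z, x), ?_⟩
    apply Subgraph.edgeSet_mono hle
    rw [Walk.mem_edges_toSubgraph]
    simp
  · apply hle.1
    rw [Walk.mem_verts_toSubgraph, Walk.support_cons]
    exact List.mem_cons_of_mem _ w.toPath.1.start_mem_support

lemma degree_pos_of_connected (hconn : H.Connected) (hedge : H.edgeSet.Nonempty) (v : V) :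
    0 < H.degree v := by
  obtain ⟨e, he⟩ := hedge
  revert he
  refine Sym2.ind (fun a b he => ?_) e
  have hadj : H.Adj a b := he
  rw [degree_pos_iff_exists_adj]
  obtain ⟨w⟩ := hconn.preconnected v a
  cases w with
  | nil => exact ⟨b, hadj⟩
  | cons h _ => exact ⟨_, h⟩

lemma exists_nonbridge_of_no_leaf (hconn : H.Connected) (hedge : H.edgeSet.Nonempty)
    (hnl : ∀ v, H.degree v ≠ 1) : ∃ x y, H.Adj x y ∧ ¬ H.IsBridge s(x, y) := by
  by_contra hall
  push_neg at hall
  have hac : H.IsAcyclic := by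
    rw [isAcyclic_iff_forall_adj_isBridge]
    exact fun v w h => hall v w h
  have htree : H.IsTree := ⟨hconn, hac⟩
  have hcard := htree.card_edgeFinset
  have hsum := H.sum_degrees_eq_twice_card_edges
  have hdeg2 : ∀ v : V, 2 ≤ H.degree v := by
    intro v
    have h1 := degree_pos_of_connected hconn hedge v
    have h2 := hnl v
    omega
  have hge : 2 * Fintype.card V ≤ ∑ v : V, H.degree v := by
    calc 2 * Fintype.card V = ∑ _v : V, 2 := by
          rw [Finset.sum_const, Finset.card_univ]; ring
      _ ≤ ∑ v : V, H.degree v := Finset.sum_le_sum (fun v _ => hdeg2 v)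
  have hpos : 0 < Fintype.card V := by
    obtain ⟨e, he⟩ := hedge
    revert he
    refine Sym2.ind (fun a b he => ?_) e
    exact Fintype.card_pos_iff.mpr ⟨a⟩
  omega

end BPP

namespace BPP
variable {V : Type*} [Fintype V] {H : SimpleGraph V}

lemma leaf_edge_isBridge {x y : V} (h1 : H.degree x = 1) (hadj : H.Adj x y) :
    H.IsBridge s(x, y) := by
  rw [isBridge_iff_adj_not_avoids]
  rintro ⟨w, hw⟩
  cases w with
  | nil => exact H.irrefl hadj
  | @cons _ c _ h2 t =>
    have hcy : c = y := eq_of_degree_one h1 h2 hadj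
    subst hcy
    exact hw (by simp)

lemma branch_path {x z : V} (hadj : H.Adj x z) (hbr : H.IsBridge s(x, z)) (hd2 : H.degree x ≠ 2) :
    ∃ Q : H.Subgraph, Maximal Subgraph.IsBridgePath Q ∧ EndOf Q x z := by
  obtain ⟨Q, hmax, hedge, hxv⟩ := exists_maximal_bridgePath hadj hbr
  obtain ⟨m, hE⟩ := exists_endOf_of_mem_verts hmax hxv hd2
  have hzm : z = m := hE.unique_nbr z (Subgraph.mem_edgeSet.mp hedge)
  rw [← hzm] at hE
  exact ⟨Q, hmax, hE⟩

lemma core (hconn : H.Connected) (r : V)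
    (hrgood : H.degree r = 1 ∨ ((∀ v, H.degree v ≠ 1) ∧
      ∃ K0 : H.Subgraph, Maximal Subgraph.IsTwoEdgeConnected K0 ∧ K0.edgeSet.Nonempty ∧
        r ∈ K0.verts))
    (hleaves : ({v : V | H.degree v = 1}).ncard ≤ 2) :
    {P : H.Subgraph | Maximal Subgraph.IsBridgePath P}.ncard ≤
      2 * {K : H.Subgraph |
            Maximal Subgraph.IsTwoEdgeConnected K ∧ K.edgeSet.Nonempty}.ncard + 1 := by
  classical
  have hfinN : {P : H.Subgraph | Maximal Subgraph.IsBridgePath P}.Finite := Set.toFinite _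
  have hfinC : {K : H.Subgraph |
      Maximal Subgraph.IsTwoEdgeConnected K ∧ K.edgeSet.Nonempty}.Finite := Set.toFinite _
  rw [Set.ncard_eq_toFinset_card _ hfinN, Set.ncard_eq_toFinset_card _ hfinC]
  set NF := hfinN.toFinset with hNF
  set CF := hfinC.toFinset with hCF
  have hmemNF : ∀ P : H.Subgraph, P ∈ NF ↔ Maximal Subgraph.IsBridgePath P := by
    intro P; rw [hNF, Set.Finite.mem_toFinset]; exact Iff.rfl
  have hmemCF : ∀ K : H.Subgraph, K ∈ CF ↔
      Maximal Subgraph.IsTwoEdgeConnected K ∧ K.edgeSet.Nonempty := by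
    intro K; rw [hCF, Set.Finite.mem_toFinset]; exact Iff.rfl
  -- choose "away-from-r" end data for each maximal bridge path
  have hsel : ∀ P : H.Subgraph, ∃ p : V × V,
      Maximal Subgraph.IsBridgePath P →
        EndOf P p.1 p.2 ∧ ¬ Avoids H s(p.1, p.2) p.1 r := by
    intro P
    by_cases hP : Maximal Subgraph.IsBridgePath P
    · obtain ⟨x, n, hE, hA⟩ := exists_good_end hconn r hP.1
      exact ⟨(x, n), fun _ => ⟨hE, hA⟩⟩
    · exact ⟨(r, r), fun h => absurd h hP⟩
  choose xn hxn using hsel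
  have hEnd : ∀ P ∈ NF, EndOf P (xn P).1 (xn P).2 :=
    fun P hP => (hxn P ((hmemNF P).mp hP)).1
  have hAv : ∀ P ∈ NF, ¬ Avoids H s((xn P).1, (xn P).2) (xn P).1 r :=
    fun P hP => (hxn P ((hmemNF P).mp hP)).2
  have hxr : ∀ P ∈ NF, (xn P).1 ≠ r := by
    intro P hP h
    exact hAv P hP (by rw [h]; exact Avoids.rfl)
  have hinjV : ∀ P ∈ NF, ∀ Q ∈ NF, (xn P).1 = (xn Q).1 → P = Q := by
    intro P hP Q hQ hxy
    refine inj_core hconn ((hmemNF P).mp hP) ((hmemNF Q).mp hQ) (hEnd P hP) (hEnd Q hQ)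
      (hAv P hP) (hAv Q hQ) ?_ ?_
    · rw [hxy]; exact Avoids.rfl
    · rw [← hxy]; exact Avoids.rfl
  -- partition
  set Pl := NF.filter (fun P => H.degree (xn P).1 = 1) with hPl
  set Pc := NF.filter (fun P => ¬ H.degree (xn P).1 = 1 ∧
      ∃ z, H.Adj (xn P).1 z ∧ ¬ H.IsBridge s((xn P).1, z)) with hPc
  set Pb := NF.filter (fun P => ¬ H.degree (xn P).1 = 1 ∧
      ¬ ∃ z, H.Adj (xn P).1 z ∧ ¬ H.IsBridge s((xn P).1, z)) with hPb
  have hPlNF : Pl ⊆ NF := Finset.filter_subset _ _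
  have hPcNF : Pc ⊆ NF := Finset.filter_subset _ _
  have hPbNF : Pb ⊆ NF := Finset.filter_subset _ _
  have hpart : NF.card = Pl.card + Pc.card + Pb.card := by
    have e1 : Pl ∪ Pc ∪ Pb = NF := by
      ext P
      simp only [hPl, hPc, hPb, Finset.mem_union, Finset.mem_filter]
      constructor
      · rintro ((h | h) | h)
        · exact h.1
        · exact h.1
        · exact h.1
      · intro h
        by_cases h1 : H.degree (xn P).1 = 1
        · exact Or.inl (Or.inl ⟨h, h1⟩)
        by_cases h2 : ∃ z, H.Adj (xn P).1 z ∧ ¬ H.IsBridge s((xn P).1, z)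
        · exact Or.inl (Or.inr ⟨h, h1, h2⟩)
        · exact Or.inr ⟨h, h1, h2⟩
    have d1 : Disjoint Pl Pc := by
      rw [Finset.disjoint_left]
      intro P h1 h2
      rw [hPl, Finset.mem_filter] at h1
      rw [hPc, Finset.mem_filter] at h2
      exact h2.2.1 h1.2
    have d2 : Disjoint (Pl ∪ Pc) Pb := by
      rw [Finset.disjoint_left]
      intro P h1 h2
      rw [hPb, Finset.mem_filter] at h2
      rw [Finset.mem_union, hPl, hPc, Finset.mem_filter, Finset.mem_filter] at h1
      rcases h1 with h1 | h1
      · exact h2.2.1 h1.2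
      · exact h2.2.2 h1.2.2
    rw [← e1, Finset.card_union_of_disjoint d2, Finset.card_union_of_disjoint d1]
  -- triple pairs at branch ends
  have hS2sel : ∀ P : H.Subgraph, ∃ T : Finset (H.Subgraph × V), P ∈ Pb →
      (T.card = 3 ∧ ∀ t ∈ T, t.1 ∈ NF ∧ t.2 = (xn P).1 ∧ ∃ m, EndOf t.1 t.2 m) := by
    intro P
    by_cases hP : P ∈ Pb
    swap
    · exact ⟨∅, fun h => absurd h hP⟩
    have hPf := hP
    rw [hPb, Finset.mem_filter] at hPf
    obtain ⟨hPNF, hnd1, hnnb⟩ := hPf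
    push_neg at hnnb
    have hd3 : 3 ≤ H.degree (xn P).1 := by
      rcases classify_end ((hmemNF P).mp hPNF) (hEnd P hPNF) with h | h | h
      · exact absurd h hnd1
      · obtain ⟨z, hz, hznb⟩ := h
        exact absurd (hnnb z hz) hznb
      · exact h
    have hd2 : H.degree (xn P).1 ≠ 2 := by omega
    obtain ⟨a, b, c, haj, hbj, hcj, hab, hac, hbc⟩ := exists_three_nbrs hd3
    obtain ⟨Qa, hQamax, hQaE⟩ := branch_path haj (hnnb a haj) hd2
    obtain ⟨Qb, hQbmax, hQbE⟩ := branch_path hbj (hnnb b hbj) hd2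
    obtain ⟨Qc, hQcmax, hQcE⟩ := branch_path hcj (hnnb c hcj) hd2
    have hd : ∀ {QA QB : H.Subgraph} {zA zB : V}, EndOf QA (xn P).1 zA →
        EndOf QB (xn P).1 zB → zA ≠ zB → QA ≠ QB := by
      intro QA QB zA zB hA hB hne hEq
      subst hEq
      exact hne ((hB.unique_nbr zA (Subgraph.mem_edgeSet.mp hA.mem_edgeSet)).trans rfl)
    have hQab : Qa ≠ Qb := hd hQaE hQbE hab
    have hQac : Qa ≠ Qc := hd hQaE hQcE hac
    have hQbc : Qb ≠ Qc := hd hQbE hQcE hbc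
    refine ⟨{(Qa, (xn P).1), (Qb, (xn P).1), (Qc, (xn P).1)}, fun _ => ⟨?_, ?_⟩⟩
    · rw [Finset.card_insert_of_notMem (by simp [hQab, hQac]),
        Finset.card_insert_of_notMem (by simp [hQbc]), Finset.card_singleton]
    · intro t ht
      simp only [Finset.mem_insert, Finset.mem_singleton] at ht
      rcases ht with rfl | rfl | rfl
      · exact ⟨(hmemNF Qa).mpr hQamax, rfl, (xn P).2 |> fun _ => ⟨a, hQaE⟩⟩
      · exact ⟨(hmemNF Qb).mpr hQbmax, rfl, ⟨b, hQbE⟩⟩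
      · exact ⟨(hmemNF Qc).mpr hQcmax, rfl, ⟨c, hQcE⟩⟩
  choose TF hTF using hS2sel
  set S2 := Pb.biUnion TF with hS2
  have hdisjTF : ∀ P ∈ Pb, ∀ Q ∈ Pb, P ≠ Q → Disjoint (TF P) (TF Q) := by
    intro P hP Q hQ hne
    rw [Finset.disjoint_left]
    intro t htP htQ
    have e1 := ((hTF P hP).2 t htP).2.1
    have e2 := ((hTF Q hQ).2 t htQ).2.1
    exact hne (hinjV P (hPbNF hP) Q (hPbNF hQ) (e1 ▸ e2))
  have hS2card : S2.card = 3 * Pb.card := by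
    rw [hS2, Finset.card_biUnion hdisjTF,
      Finset.sum_const_nat (fun P hP => (hTF P hP).1), mul_comm]
  -- single pairs at leaf/component ends
  set S1 := (Pl ∪ Pc).image (fun P => (P, (xn P).1)) with hS1
  have hS1card : S1.card = Pl.card + Pc.card := by
    rw [hS1, Finset.card_image_of_injOn (fun P _ Q _ h => congrArg Prod.fst h),
      Finset.card_union_of_disjoint]
    rw [Finset.disjoint_left]
    intro P h1 h2
    rw [hPl, Finset.mem_filter] at h1
    rw [hPc, Finset.mem_filter] at h2
    exact h2.2.1 h1.2
  -- the global endpoint-pair finset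
  have hseluv : ∀ Q : H.Subgraph, ∃ p : V × V, Maximal Subgraph.IsBridgePath Q →
      ∀ z m, EndOf Q z m → z = p.1 ∨ z = p.2 := by
    intro Q
    by_cases hQ : Maximal Subgraph.IsBridgePath Q
    · obtain ⟨u, nu, v, nv, _, _, _, _, _, hcases, _⟩ := exists_both_ends hQ.1
      exact ⟨(u, v), fun _ => hcases⟩
    · exact ⟨(r, r), fun h => absurd h hQ⟩
  choose uv huv using hseluv
  set EP := NF.biUnion (fun Q => {(Q, (uv Q).1), (Q, (uv Q).2)}) with hEP
  have hEPcard : EP.card ≤ 2 * NF.card := by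
    calc EP.card ≤ ∑ Q ∈ NF, ({(Q, (uv Q).1), (Q, (uv Q).2)} : Finset (H.Subgraph × V)).card :=
        Finset.card_biUnion_le
      _ ≤ ∑ _Q ∈ NF, 2 := Finset.sum_le_sum
          (fun Q _ => (Finset.card_insert_le _ _).trans (by simp))
      _ = 2 * NF.card := by rw [Finset.sum_const, smul_eq_mul, mul_comm]
  have hmemEP : ∀ (Q : H.Subgraph) (z : V), Q ∈ NF → (∃ m, EndOf Q z m) → (Q, z) ∈ EP := by
    rintro Q z hQ ⟨m, hE⟩
    rw [hEP, Finset.mem_biUnion]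
    refine ⟨Q, hQ, ?_⟩
    rcases huv Q ((hmemNF Q).mp hQ) z m hE with h | h <;> simp [h]
  have hsub : S1 ∪ S2 ⊆ EP := by
    intro t ht
    rw [Finset.mem_union] at ht
    rcases ht with ht | ht
    · rw [hS1, Finset.mem_image] at ht
      obtain ⟨P, hP, rfl⟩ := ht
      have hPNF : P ∈ NF := by
        rw [Finset.mem_union] at hP
        rcases hP with hP | hP
        · exact hPlNF hP
        · exact hPcNF hP
      exact hmemEP P (xn P).1 hPNF ⟨(xn P).2, hEnd P hPNF⟩
    · rw [hS2, Finset.mem_biUnion] at ht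
      obtain ⟨P, hP, htP⟩ := ht
      obtain ⟨h1, h2, h3⟩ := (hTF P hP).2 t htP
      exact hmemEP t.1 t.2 h1 h3
  have hdisj12 : Disjoint S1 S2 := by
    rw [Finset.disjoint_left]
    intro t ht1 ht2
    rw [hS1, Finset.mem_image] at ht1
    obtain ⟨P, hP, rfl⟩ := ht1
    rw [hS2, Finset.mem_biUnion] at ht2
    obtain ⟨Q, hQ, htQ⟩ := ht2
    have e2 := ((hTF Q hQ).2 _ htQ).2.1
    have hPNF : P ∈ NF := by
      rw [Finset.mem_union] at hP
      rcases hP with hP | hP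
      · exact hPlNF hP
      · exact hPcNF hP
    have : P = Q := hinjV P hPNF Q (hPbNF hQ) e2
    subst this
    rw [Finset.mem_union] at hP
    rw [hPb, Finset.mem_filter] at hQ
    rcases hP with hP | hP
    · rw [hPl, Finset.mem_filter] at hP
      exact hQ.2.1 hP.2
    · rw [hPc, Finset.mem_filter] at hP
      exact hQ.2.2 hP.2.2
  have hS12card : (S1 ∪ S2).card = Pl.card + Pc.card + 3 * Pb.card := by
    rw [Finset.card_union_of_disjoint hdisj12, hS1card, hS2card]
  -- component map
  have hKsel : ∀ P : H.Subgraph, ∃ K : H.Subgraph, P ∈ Pc →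
      (Maximal Subgraph.IsTwoEdgeConnected K ∧ K.edgeSet.Nonempty ∧ (xn P).1 ∈ K.verts) := by
    intro P
    by_cases hP : P ∈ Pc
    swap
    · exact ⟨⊥, fun h => absurd h hP⟩
    have hPf := hP
    rw [hPc, Finset.mem_filter] at hPf
    obtain ⟨z, hz, hznb⟩ := hPf.2.2
    obtain ⟨K, h1, h2, h3⟩ := exists_maximal_component hz hznb
    exact ⟨K, fun _ => ⟨h1, h2, h3⟩⟩
  choose KP hKP using hKsel
  have hKinj : ∀ P ∈ Pc, ∀ Q ∈ Pc, KP P = KP Q → P = Q := by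
    intro P hP Q hQ hK
    refine inj_core hconn ((hmemNF P).mp (hPcNF hP)) ((hmemNF Q).mp (hPcNF hQ))
      (hEnd P (hPcNF hP)) (hEnd Q (hPcNF hQ)) (hAv P (hPcNF hP)) (hAv Q (hPcNF hQ)) ?_ ?_
    · exact twoEdgeConnected_avoids (hKP P hP).1.1 (hKP P hP).2.2
        (by rw [hK]; exact (hKP Q hQ).2.2) (hEnd P (hPcNF hP)).isBridge
    · exact twoEdgeConnected_avoids (hKP Q hQ).1.1 (hKP Q hQ).2.2
        (by rw [← hK]; exact (hKP P hP).2.2) (hEnd Q (hPcNF hQ)).isBridge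
  have hKmem : ∀ P ∈ Pc, KP P ∈ CF := by
    intro P hP
    exact (hmemCF _).mpr ⟨(hKP P hP).1, (hKP P hP).2.1⟩
  -- now the case split
  rcases hrgood with hdr | ⟨hnl, K0, hK0max, hK0e, hrK0⟩
  · -- r is a leaf
    -- the extra pair
    obtain ⟨y, hy⟩ := (H.degree_pos_iff_exists_adj r).mp (by omega : 0 < H.degree r)
    have hybr : H.IsBridge s(r, y) := leaf_edge_isBridge hdr hy
    obtain ⟨Pr, hPrmax, hPrE⟩ := branch_path hy hybr (by omega)
    have hPrNF : Pr ∈ NF := (hmemNF Pr).mpr hPrmax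
    have hprEP : (Pr, r) ∈ EP := hmemEP Pr r hPrNF ⟨y, hPrE⟩
    have hprnot : (Pr, r) ∉ S1 ∪ S2 := by
      intro hmem
      rw [Finset.mem_union] at hmem
      rcases hmem with hmem | hmem
      · rw [hS1, Finset.mem_image] at hmem
        obtain ⟨P, hP, hPe⟩ := hmem
        have hPNF : P ∈ NF := by
          rw [Finset.mem_union] at hP
          rcases hP with hP | hP
          · exact hPlNF hP
          · exact hPcNF hP
        exact hxr P hPNF (congrArg Prod.snd hPe)
      · rw [hS2, Finset.mem_biUnion] at hmem
        obtain ⟨Q, hQ, htQ⟩ := hmem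
        have := ((hTF Q hQ).2 _ htQ).2.1
        exact hxr Q (hPbNF hQ) this.symm
    have hbig : Pl.card + Pc.card + 3 * Pb.card + 1 ≤ 2 * NF.card := by
      have hins : insert (Pr, r) (S1 ∪ S2) ⊆ EP := by
        intro t ht
        rw [Finset.mem_insert] at ht
        rcases ht with rfl | ht
        · exact hprEP
        · exact hsub ht
      have := Finset.card_le_card hins
      rw [Finset.card_insert_of_notMem hprnot, hS12card] at this
      omega
    -- Pl bound
    have hfinL : ({v : V | H.degree v = 1}).Finite := Set.toFinite _
    have hLcard : hfinL.toFinset.card ≤ 2 := by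
      rwa [← Set.ncard_eq_toFinset_card _ hfinL]
    have hrL : r ∈ hfinL.toFinset := by
      rw [Set.Finite.mem_toFinset]; exact hdr
    have hPlim : Pl.image (fun P => (xn P).1) ⊆ hfinL.toFinset.erase r := by
      intro z hz
      rw [Finset.mem_image] at hz
      obtain ⟨P, hP, rfl⟩ := hz
      rw [Finset.mem_erase]
      refine ⟨hxr P (hPlNF hP), ?_⟩
      rw [Set.Finite.mem_toFinset]
      have := hP
      rw [hPl, Finset.mem_filter] at this
      exact this.2
    have hPlcard : Pl.card ≤ 1 := by
      have h1 : Pl.card = (Pl.image (fun P => (xn P).1)).card := by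
        rw [Finset.card_image_of_injOn
          (fun P hP Q hQ h => hinjV P (hPlNF hP) Q (hPlNF hQ) h)]
      have h2 := Finset.card_le_card hPlim
      rw [Finset.card_erase_of_mem hrL] at h2
      omega
    -- Pc bound
    have hPccard : Pc.card ≤ CF.card := by
      have h1 : Pc.card = (Pc.image KP).card := by
        rw [Finset.card_image_of_injOn (fun P hP Q hQ h => hKinj P hP Q hQ h)]
      have h2 : Pc.image KP ⊆ CF := by
        intro K hK
        rw [Finset.mem_image] at hK
        obtain ⟨P, hP, rfl⟩ := hK
        exact hKmem P hP
      have := Finset.card_le_card h2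
      omega
    omega
  · -- no leaves; r in a component K0
    have hPlempty : Pl = ∅ := by
      rw [Finset.eq_empty_iff_forall_notMem]
      intro P hP
      rw [hPl, Finset.mem_filter] at hP
      exact hnl _ hP.2
    have hbig : Pl.card + Pc.card + 3 * Pb.card ≤ 2 * NF.card := by
      have := Finset.card_le_card hsub
      rw [hS12card] at this
      omega
    have hK0CF : K0 ∈ CF := (hmemCF _).mpr ⟨hK0max, hK0e⟩
    have hPccard : Pc.card ≤ CF.card - 1 := by
      have h1 : Pc.card = (Pc.image KP).card := by
        rw [Finset.card_image_of_injOn (fun P hP Q hQ h => hKinj P hP Q hQ h)]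
      have h2 : Pc.image KP ⊆ CF.erase K0 := by
        intro K hK
        rw [Finset.mem_image] at hK
        obtain ⟨P, hP, rfl⟩ := hK
        rw [Finset.mem_erase]
        refine ⟨?_, hKmem P hP⟩
        intro hEq
        apply hAv P (hPcNF hP)
        exact twoEdgeConnected_avoids (hKP P hP).1.1 (hKP P hP).2.2
          (by rw [hEq]; exact hrK0) (hEnd P (hPcNF hP)).isBridge
      have := Finset.card_le_card h2
      rw [Finset.card_erase_of_mem hK0CF] at this
      omega
    have hCF1 : 1 ≤ CF.card := Finset.card_pos.mpr ⟨K0, hK0CF⟩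
    have hPl0 : Pl.card = 0 := by rw [hPlempty]; exact Finset.card_empty
    omega

end BPP

/-- Let `H` be a finite connected simple graph with at least one edge and with at most two
vertices of degree `1`. Let `C` be the number of maximal 2-edge-connected subgraphs of `H`
containing at least one edge, and let `N` be the number of maximal paths in `H` all of whose
edges are cut edges (bridges) of `H` and all of whose internal vertices (if any) have
degree `2` in `H`. Then `N ≤ 2C + 1`. -/
theorem card_maximal_bridge_paths_le {V : Type*} [Fintype V] (H : SimpleGraph V)
    (hconn : H.Connected) (hedge : H.edgeSet.Nonempty)
    (hleaves : ({v : V | H.degree v = 1}).ncard ≤ 2) :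
    {P : H.Subgraph | Maximal Subgraph.IsBridgePath P}.ncard ≤
      2 * {K : H.Subgraph |
            Maximal Subgraph.IsTwoEdgeConnected K ∧ K.edgeSet.Nonempty}.ncard + 1 := by
  classical
  by_cases hleaf : ∃ v, H.degree v = 1
  · obtain ⟨r, hr⟩ := hleaf
    exact BPP.core hconn r (Or.inl hr) hleaves
  · push_neg at hleaf
    obtain ⟨x, y, hadj, hnb⟩ := BPP.exists_nonbridge_of_no_leaf hconn hedge hleaf
    obtain ⟨K0, h1, h2, h3⟩ := BPP.exists_maximal_component hadj hnb
    exact BPP.core hconn x (Or.inr ⟨hleaf, K0, h1, h2, h3⟩) hleaves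

end
end
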